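/- arXiv:1710.02333 — 2 statements merged into one kernel-verified Lean document; each statement's English description precedes it below -/
import Mathlib

section
/- Under the inhomogeneous Poisson alternative and the limiting regime, the normalized scaled perimeter converges almost surely: (1/m) P_m → 4·( ∫_{[0,1]²} q_{c,κ,f}(x) dx − ∫_{[0,1]²} q_{c,κ,f}(x)² dx ) as m → ∞, where q_{c,κ,f}(x) = Σ_{k=0}^{c−1} (κ^k / k!) f(x)^k e^{−κ f(x)}. -/
open MeasureTheory ProbabilityTheory Finset Filter

noncomputable section

/-- The scaled total area `A_{m} = (1/m) ∑_{i,j=1}^m Z_{i,j}` of a binary image `Z`. -/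
def areaSum (m : ℕ) (Z : ℕ → ℕ → ℝ) : ℝ :=
  (1 / (m : ℝ)) * ∑ i ∈ Finset.Icc 1 m, ∑ j ∈ Finset.Icc 1 m, Z i j

/-- The scaled perimeter `P_{m} = (1/m) ∑_{i,j=1}^m ψ(i,j)` of a binary image `Z`,
where `ψ(i,j) = 0` if `Z i j = 0` and `ψ(i,j) = 4 - (Z (i-1) j + Z (i+1) j + Z i (j-1) + Z i (j+1))`
if `Z i j = 1`. -/
def perimSum (m : ℕ) (Z : ℕ → ℕ → ℝ) : ℝ :=
  (1 / (m : ℝ)) * ∑ i ∈ Finset.Icc 1 m, ∑ j ∈ Finset.Icc 1 m,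
    (if Z i j = 1 then 4 - (Z (i - 1) j + Z (i + 1) j + Z i (j - 1) + Z i (j + 1)) else 0)

/-- The scaled Euler characteristic `χ_{m} = (1/m) ∑_{i,j=1}^m W_{i,j}` of a binary image `Z`,
where, with `S = Z i j + Z (i+1) j + Z i (j+1) + Z (i+1) (j+1)`: `W = 1/4` if `S = 1`;
`W = -1/4` if `S = 3`; `W = -1/2` if `S = 2` and one of the two diagonal products is `1`;
and `W = 0` otherwise. -/
def eulerSum (m : ℕ) (Z : ℕ → ℕ → ℝ) : ℝ :=
  (1 / (m : ℝ)) * ∑ i ∈ Finset.Icc 1 m, ∑ j ∈ Finset.Icc 1 m,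
    (if Z i j + Z (i + 1) j + Z i (j + 1) + Z (i + 1) (j + 1) = 1 then (1 / 4 : ℝ)
      else if Z i j + Z (i + 1) j + Z i (j + 1) + Z (i + 1) (j + 1) = 3 then -(1 / 4)
      else if Z i j + Z (i + 1) j + Z i (j + 1) + Z (i + 1) (j + 1) = 2 ∧
          (Z i j * Z (i + 1) (j + 1) = 1 ∨ Z (i + 1) j * Z i (j + 1) = 1) then -(1 / 2)
      else 0)

/-- The interval `[(i-1)/m, i/m)`, closed at the right end when `i = m`. -/
def cellIv (m i : ℕ) : Set ℝ :=
  if i = m then Set.Icc (((i : ℝ) - 1) / m) ((i : ℝ) / m)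
  else Set.Ico (((i : ℝ) - 1) / m) ((i : ℝ) / m)

/-- The cell `C_{i,j}^{(m)}` of the partition of the unit square into `m²` bins. -/
def cellSet (m i j : ℕ) : Set (ℝ × ℝ) := cellIv m i ×ˢ cellIv m j

/-- The unit square `[0,1]²`. -/
def unitSq : Set (ℝ × ℝ) := Set.Icc (0 : ℝ) 1 ×ˢ Set.Icc (0 : ℝ) 1

/-- `q_{c,κ,f}(x) = ∑_{k=0}^{c-1} (κ^k/k!) f(x)^k e^{-κ f(x)}`. -/
def qFun (c : ℕ) (κ : ℝ) (f : ℝ × ℝ → ℝ) (x : ℝ × ℝ) : ℝ :=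
  ∑ k ∈ Finset.range c, κ ^ k / (Nat.factorial k : ℝ) * f x ^ k * Real.exp (-(κ * f x))

/-- The binary image obtained by thresholding the counts `Y` at level `c`, with a white
border: `Z_{i,j} = 1` iff `1 ≤ i,j ≤ m` and `Y_{i,j} ≥ c`. -/
def binZ (c m : ℕ) (Y : ℕ → ℕ → ℕ) (i j : ℕ) : ℝ :=
  if 1 ≤ i ∧ i ≤ m ∧ 1 ≤ j ∧ j ≤ m ∧ c ≤ Y i j then 1 else 0

namespace PerimHelper


lemma cellIv_subset_Icc (m i : ℕ) :
    cellIv m i ⊆ Set.Icc (((i : ℝ) - 1) / m) ((i : ℝ) / m) := by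
  unfold cellIv; split
  · exact subset_rfl
  · exact Set.Ico_subset_Icc_self

lemma cellIv_subset_unit {m i : ℕ} (h1 : 1 ≤ i) (h2 : i ≤ m) :
    cellIv m i ⊆ Set.Icc (0 : ℝ) 1 := by
  have hm : (0:ℝ) < m := by
    have : 1 ≤ m := le_trans h1 h2
    exact_mod_cast Nat.lt_of_lt_of_le Nat.zero_lt_one this
  refine (cellIv_subset_Icc m i).trans ?_
  apply Set.Icc_subset_Icc
  · apply div_nonneg _ hm.le
    have : (1:ℝ) ≤ i := by exact_mod_cast h1
    linarith
  · rw [div_le_one hm]; exact_mod_cast h2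

lemma measurableSet_cellIv (m i : ℕ) : MeasurableSet (cellIv m i) := by
  unfold cellIv; split
  · exact measurableSet_Icc
  · exact measurableSet_Ico

lemma measurableSet_cellSet (m i j : ℕ) : MeasurableSet (cellSet m i j) :=
  (measurableSet_cellIv m i).prod (measurableSet_cellIv m j)

lemma measurableSet_unitSq : MeasurableSet unitSq :=
  measurableSet_Icc.prod measurableSet_Icc

lemma volume_cellIv {m : ℕ} (hm : 1 ≤ m) (i : ℕ) :
    volume (cellIv m i) = ENNReal.ofReal (1 / m) := by
  have hm : (0:ℝ) < m := by exact_mod_cast Nat.lt_of_lt_of_le Nat.zero_lt_one hm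
  have h : (i:ℝ)/m - ((i:ℝ)-1)/m = 1/m := by field_simp; ring
  unfold cellIv; split
  · rw [Real.volume_Icc, h]
  · rw [Real.volume_Ico, h]

lemma volume_cellSet {m : ℕ} (hm : 1 ≤ m) (i j : ℕ) :
    volume (cellSet m i j) = ENNReal.ofReal (1 / m) * ENNReal.ofReal (1 / m) := by
  rw [cellSet, MeasureTheory.Measure.volume_eq_prod, MeasureTheory.Measure.prod_prod,
    volume_cellIv hm i, volume_cellIv hm j]

lemma volume_cellSet_toReal {m : ℕ} (hm : 1 ≤ m) (i j : ℕ) :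
    (volume (cellSet m i j)).toReal = 1 / (m:ℝ)^2 := by
  rw [volume_cellSet hm i j, ENNReal.toReal_mul, ENNReal.toReal_ofReal (by positivity)]
  ring

def idx (m : ℕ) (t : ℝ) : ℕ := min m (Nat.floor ((m:ℝ) * t) + 1)

lemma idx_mem {m : ℕ} (hm : 1 ≤ m) (t : ℝ) : idx m t ∈ Finset.Icc 1 m := by
  simp only [Finset.mem_Icc, idx]
  constructor
  · exact le_min hm (Nat.le_add_left 1 _)
  · exact min_le_left _ _

lemma idx_eq_of_mem {m i : ℕ} (h1 : 1 ≤ i) (h2 : i ≤ m) {t : ℝ}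
    (ht : t ∈ cellIv m i) : idx m t = i := by
  have hm0 : (0:ℝ) < m := by
    exact_mod_cast Nat.lt_of_lt_of_le Nat.zero_lt_one (le_trans h1 h2)
  have hti : ((i:ℝ)-1)/m ≤ t := ((cellIv_subset_Icc m i) ht).1
  have htnn : 0 ≤ (m:ℝ) * t := by
    have : (0:ℝ) ≤ t := le_trans (by
      apply div_nonneg _ hm0.le
      have : (1:ℝ) ≤ i := by exact_mod_cast h1
      linarith) hti
    positivity
  have hlow : i - 1 ≤ Nat.floor ((m:ℝ)*t) := by
    apply Nat.le_floor
    have : ((i - 1 : ℕ) : ℝ) = (i:ℝ) - 1 := by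
      have : (1:ℝ) ≤ i := by exact_mod_cast h1
      push_cast [h1]; ring
    rw [this]
    calc (i:ℝ) - 1 = (((i:ℝ)-1)/m) * m := by field_simp
    _ ≤ t * m := by apply mul_le_mul_of_nonneg_right hti hm0.le
    _ = m * t := by ring
  by_cases him : i = m
  · have hle : m ≤ Nat.floor ((m:ℝ)*t) + 1 := by omega
    rw [idx, min_eq_left hle]
    exact him.symm
  · have ht' : t < (i:ℝ)/m := by
      have := ht
      unfold cellIv at this
      rw [if_neg him] at this
      exact this.2
    have hup : Nat.floor ((m:ℝ)*t) < i := by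
      rw [Nat.floor_lt htnn]
      calc (m:ℝ) * t < m * ((i:ℝ)/m) := by apply mul_lt_mul_of_pos_left ht' hm0
      _ = i := by field_simp
    have heq : Nat.floor ((m:ℝ)*t) + 1 = i := by omega
    rw [idx, heq, min_eq_right h2]

lemma mem_cellIv_idx {m : ℕ} (hm : 1 ≤ m) {t : ℝ} (ht : t ∈ Set.Icc (0:ℝ) 1) :
    t ∈ cellIv m (idx m t) := by
  have hm0 : (0:ℝ) < m := by exact_mod_cast Nat.lt_of_lt_of_le Nat.zero_lt_one hm
  have htnn : 0 ≤ (m:ℝ) * t := by nlinarith [ht.1]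
  set k := Nat.floor ((m:ℝ)*t) with hk
  have hkle : (k:ℝ) ≤ (m:ℝ) * t := Nat.floor_le htnn
  have hklt : (m:ℝ) * t < k + 1 := Nat.lt_floor_add_one _
  have hmt : (m:ℝ) * t ≤ m := by nlinarith [ht.2]
  by_cases hkm : m ≤ k
  · have h1 : (m:ℝ) ≤ k := by exact_mod_cast hkm
    have ht1 : t = 1 := by nlinarith
    have : idx m t = m := by simp [idx]; omega
    rw [this, ht1]
    unfold cellIv
    rw [if_pos rfl]
    constructor
    · rw [div_le_one hm0]; linarith
    · rw [le_div_iff₀ hm0]; linarith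
  · push_neg at hkm
    have hidx : idx m t = k + 1 := by simp [idx]; omega
    rw [hidx]
    have hlow : ((k:ℝ) + 1 - 1)/m ≤ t := by
      rw [div_le_iff₀ hm0]
      nlinarith
    have hup : t < ((k:ℝ)+1)/m := by
      rw [lt_div_iff₀ hm0]
      nlinarith
    unfold cellIv
    split
    · exact ⟨by push_cast; linarith [hlow], by push_cast; rw [le_div_iff₀ hm0]; nlinarith⟩
    · exact ⟨by push_cast; linarith [hlow], by push_cast; linarith [hup]⟩

lemma mem_cellSet_idx {m : ℕ} (hm : 1 ≤ m) {x : ℝ × ℝ} (hx : x ∈ unitSq) :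
    x ∈ cellSet m (idx m x.1) (idx m x.2) :=
  ⟨mem_cellIv_idx hm hx.1, mem_cellIv_idx hm hx.2⟩

lemma cellSet_subset_unitSq {m i j : ℕ} (hi : i ∈ Finset.Icc 1 m) (hj : j ∈ Finset.Icc 1 m) :
    cellSet m i j ⊆ unitSq := by
  rw [Finset.mem_Icc] at hi hj
  exact Set.prod_mono (cellIv_subset_unit hi.1 hi.2) (cellIv_subset_unit hj.1 hj.2)

lemma unitSq_eq_biUnion {m : ℕ} (hm : 1 ≤ m) :
    unitSq = ⋃ p ∈ (Finset.Icc 1 m ×ˢ Finset.Icc 1 m : Finset (ℕ × ℕ)),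
      cellSet m p.1 p.2 := by
  apply Set.Subset.antisymm
  · intro x hx
    refine Set.mem_iUnion₂.mpr ⟨(idx m x.1, idx m x.2), ?_, mem_cellSet_idx hm hx⟩
    rw [Finset.mem_product]
    exact ⟨idx_mem hm _, idx_mem hm _⟩
  · intro x hx
    simp only [Set.mem_iUnion] at hx
    obtain ⟨p, hp, hxp⟩ := hx
    rw [Finset.mem_product] at hp
    exact cellSet_subset_unitSq hp.1 hp.2 hxp

lemma cellSet_pairwise_disjoint {m : ℕ} :
    ∀ p ∈ (Finset.Icc 1 m ×ˢ Finset.Icc 1 m : Finset (ℕ × ℕ)),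
    ∀ q ∈ (Finset.Icc 1 m ×ˢ Finset.Icc 1 m : Finset (ℕ × ℕ)),
      p ≠ q → Disjoint (cellSet m p.1 p.2) (cellSet m q.1 q.2) := by
  intro p hp q hq hpq
  rw [Finset.mem_product, Finset.mem_Icc, Finset.mem_Icc] at hp hq
  rw [Set.disjoint_left]
  intro x hxp hxq
  apply hpq
  have e1 : p.1 = idx m x.1 := (idx_eq_of_mem hp.1.1 hp.1.2 hxp.1).symm
  have e2 : p.2 = idx m x.2 := (idx_eq_of_mem hp.2.1 hp.2.2 hxp.2).symm
  have e3 : q.1 = idx m x.1 := (idx_eq_of_mem hq.1.1 hq.1.2 hxq.1).symm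
  have e4 : q.2 = idx m x.2 := (idx_eq_of_mem hq.2.1 hq.2.2 hxq.2).symm
  exact Prod.ext (e1.trans e3.symm) (e2.trans e4.symm)


def qS (c : ℕ) (a : ℝ) : ℝ :=
  ∑ k ∈ Finset.range c, Real.exp (-a) * a ^ k / (Nat.factorial k : ℝ)

def pv (c : ℕ) (a : ℝ) : ℝ := 1 - qS c a

def aVal (f : ℝ × ℝ → ℝ) (lam : ℕ → ℝ) (m i j : ℕ) : ℝ :=
  lam m * ∫ x in cellSet m i j, f x

def pG (c : ℕ) (f : ℝ × ℝ → ℝ) (lam : ℕ → ℝ) (m i j : ℕ) : ℝ :=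
  if 1 ≤ i ∧ i ≤ m ∧ 1 ≤ j ∧ j ≤ m then pv c (aVal f lam m i j) else 0

def eV (c : ℕ) (f : ℝ × ℝ → ℝ) (lam : ℕ → ℝ) (m i j : ℕ) : ℝ :=
  pG c f lam m i j * (4 - (pG c f lam m (i-1) j + pG c f lam m (i+1) j
    + pG c f lam m i (j-1) + pG c f lam m i (j+1)))

def muM (c : ℕ) (f : ℝ × ℝ → ℝ) (lam : ℕ → ℝ) (m : ℕ) : ℝ :=
  (1/(m:ℝ)^2) * ∑ p ∈ (Finset.Icc 1 m ×ˢ Finset.Icc 1 m : Finset (ℕ × ℕ)),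
    eV c f lam m p.1 p.2

lemma qS_nonneg (c : ℕ) {a : ℝ} (ha : 0 ≤ a) : 0 ≤ qS c a := by
  apply Finset.sum_nonneg
  intro k _
  positivity

lemma qS_le_one (c : ℕ) {a : ℝ} (ha : 0 ≤ a) : qS c a ≤ 1 := by
  have h1 : qS c a = Real.exp (-a) * ∑ k ∈ Finset.range c, a ^ k / (Nat.factorial k : ℝ) := by
    rw [Finset.mul_sum]
    apply Finset.sum_congr rfl
    intro k _; ring
  rw [h1]
  calc Real.exp (-a) * ∑ k ∈ Finset.range c, a ^ k / (Nat.factorial k : ℝ)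
      ≤ Real.exp (-a) * Real.exp a := by
        apply mul_le_mul_of_nonneg_left (Real.sum_le_exp_of_nonneg ha c) (Real.exp_pos _).le
    _ = 1 := by rw [← Real.exp_add]; simp

lemma pv_mem (c : ℕ) {a : ℝ} (ha : 0 ≤ a) : pv c a ∈ Set.Icc (0:ℝ) 1 := by
  constructor
  · simp only [pv]; linarith [qS_le_one c ha]
  · simp only [pv]; linarith [qS_nonneg c ha]

lemma continuous_qS (c : ℕ) : Continuous (qS c) := by
  apply continuous_finset_sum
  intro k _
  exact ((Real.continuous_exp.comp continuous_neg).mul (continuous_pow k)).div_const _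

lemma continuous_pv (c : ℕ) : Continuous (pv c) :=
  continuous_const.sub (continuous_qS c)

lemma qS_eq_qFun (c : ℕ) (κ : ℝ) (f : ℝ × ℝ → ℝ) (x : ℝ × ℝ) :
    qS c (κ * f x) = qFun c κ f x := by
  unfold qS qFun
  apply Finset.sum_congr rfl
  intro k _
  rw [mul_pow]
  ring

end PerimHelper

namespace PerimHelper

lemma isCompact_unitSq : IsCompact unitSq := isCompact_Icc.prod isCompact_Icc

section Analysis

variable (c : ℕ) (κ : ℝ) (f : ℝ × ℝ → ℝ) (lam : ℕ → ℝ)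

lemma integrableOn_unitSq (hf : ContinuousOn f unitSq) : IntegrableOn f unitSq :=
  hf.integrableOn_compact isCompact_unitSq

lemma integrableOn_cell (hf : ContinuousOn f unitSq) {m i j : ℕ}
    (hi : i ∈ Finset.Icc 1 m) (hj : j ∈ Finset.Icc 1 m) :
    IntegrableOn f (cellSet m i j) :=
  (integrableOn_unitSq f hf).mono_set (cellSet_subset_unitSq hi hj)

lemma cellInt_nonneg (hf_nonneg : ∀ x ∈ unitSq, 0 ≤ f x) {m i j : ℕ}
    (hi : i ∈ Finset.Icc 1 m) (hj : j ∈ Finset.Icc 1 m) :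
    0 ≤ ∫ x in cellSet m i j, f x :=
  setIntegral_nonneg (measurableSet_cellSet m i j)
    (fun x hx => hf_nonneg x (cellSet_subset_unitSq hi hj hx))

lemma pG_mem (hf_nonneg : ∀ x ∈ unitSq, 0 ≤ f x) {m : ℕ} (hlam : 0 ≤ lam m) (i j : ℕ) :
    pG c f lam m i j ∈ Set.Icc (0:ℝ) 1 := by
  unfold pG
  split
  · next h =>
    apply pv_mem
    apply mul_nonneg hlam
    exact cellInt_nonneg f hf_nonneg (Finset.mem_Icc.mpr ⟨h.1, h.2.1⟩)
      (Finset.mem_Icc.mpr ⟨h.2.2.1, h.2.2.2⟩)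
  · exact ⟨le_refl 0, zero_le_one⟩

lemma eV_abs_le (hf_nonneg : ∀ x ∈ unitSq, 0 ≤ f x) {m : ℕ} (hlam : 0 ≤ lam m) (i j : ℕ) :
    ‖eV c f lam m i j‖ ≤ 4 := by
  have h0 := pG_mem c f lam hf_nonneg hlam i j
  have h1 := pG_mem c f lam hf_nonneg hlam (i-1) j
  have h2 := pG_mem c f lam hf_nonneg hlam (i+1) j
  have h3 := pG_mem c f lam hf_nonneg hlam i (j-1)
  have h4 := pG_mem c f lam hf_nonneg hlam i (j+1)
  simp only [Set.mem_Icc] at h0 h1 h2 h3 h4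
  rw [Real.norm_eq_abs, abs_le]
  unfold eV
  constructor
  · nlinarith [h0.1, h0.2, h1.1, h2.1, h3.1, h4.1, h1.2, h2.2, h3.2, h4.2]
  · nlinarith [h0.1, h0.2, h1.1, h2.1, h3.1, h4.1, h1.2, h2.2, h3.2, h4.2]

lemma pG_tendsto_of (hκ : 0 < κ) (hf_cont : ContinuousOn f unitSq)
    (hlam0 : ∀ m, 3 ≤ m → 0 < lam m)
    (hreg : Tendsto (fun m => lam m / (m : ℝ) ^ 2) atTop (nhds κ))
    {x : ℝ × ℝ} (hx : x ∈ unitSq) (u v : ℕ → ℕ)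
    (hval : ∀ᶠ m in atTop, 1 ≤ u m ∧ u m ≤ m ∧ 1 ≤ v m ∧ v m ≤ m)
    (hclose : ∀ δ > 0, ∀ᶠ m : ℕ in atTop, cellSet m (u m) (v m) ⊆ Metric.ball x δ) :
    Tendsto (fun m => pG c f lam m (u m) (v m)) atTop (nhds (pv c (κ * f x))) := by
  have hI : Tendsto (fun m : ℕ => (m:ℝ)^2 * ∫ y in cellSet m (u m) (v m), f y) atTop
      (nhds (f x)) := by
    rw [Metric.tendsto_nhds]
    intro ε hε
    have hcw : ContinuousWithinAt f unitSq x := hf_cont x hx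
    rw [Metric.continuousWithinAt_iff] at hcw
    obtain ⟨δ, hδ, hδf⟩ := hcw (ε/2) (by linarith)
    filter_upwards [hval, hclose δ hδ, eventually_ge_atTop 1] with m hvm hcm hm1
    have hm0 : (0:ℝ) < m := by exact_mod_cast Nat.lt_of_lt_of_le Nat.zero_lt_one hm1
    have hiu : u m ∈ Finset.Icc 1 m := Finset.mem_Icc.mpr ⟨hvm.1, hvm.2.1⟩
    have hiv : v m ∈ Finset.Icc 1 m := Finset.mem_Icc.mpr ⟨hvm.2.2.1, hvm.2.2.2⟩
    have hint : IntegrableOn f (cellSet m (u m) (v m)) := integrableOn_cell f hf_cont hiu hiv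
    have hvol : volume (cellSet m (u m) (v m)) < ⊤ := by
      rw [volume_cellSet hm1]
      exact ENNReal.mul_lt_top ENNReal.ofReal_lt_top ENNReal.ofReal_lt_top
    have hconst : IntegrableOn (fun _ : ℝ × ℝ => f x) (cellSet m (u m) (v m)) :=
      integrableOn_const hvol.ne
    have hbnd : ‖∫ y in cellSet m (u m) (v m), (f y - f x)‖
        ≤ (ε/2) * (volume (cellSet m (u m) (v m))).toReal := by
      apply norm_setIntegral_le_of_norm_le_const hvol
      · intro y hy
        have hyu : y ∈ unitSq := cellSet_subset_unitSq hiu hiv hy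
        have hyd : dist y x < δ := hcm hy
        have := hδf hyu hyd
        rw [Real.dist_eq] at this
        rw [Real.norm_eq_abs]
        exact this.le
    rw [integral_sub hint hconst, setIntegral_const, smul_eq_mul, measureReal_def,
      volume_cellSet_toReal hm1] at hbnd
    rw [Real.dist_eq]
    calc |(m:ℝ)^2 * (∫ y in cellSet m (u m) (v m), f y) - f x|
        = (m:ℝ)^2 * |(∫ y in cellSet m (u m) (v m), f y) - 1/(m:ℝ)^2 * f x| := by
          rw [← abs_of_pos (a := (m:ℝ)^2) (by positivity), ← abs_mul]
          congr 1
          field_simp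
          rw [abs_of_pos (by positivity : (0:ℝ) < (m:ℝ)^2)]
      _ ≤ (m:ℝ)^2 * ((ε/2) * (1/(m:ℝ)^2)) := by
          apply mul_le_mul_of_nonneg_left _ (by positivity)
          rw [Real.norm_eq_abs] at hbnd
          exact hbnd
      _ = ε/2 := by
          field_simp
      _ < ε := by linarith
  have haV : Tendsto (fun m => aVal f lam m (u m) (v m)) atTop (nhds (κ * f x)) := by
    have hmul := hreg.mul hI
    apply hmul.congr'
    filter_upwards [eventually_ge_atTop 1] with m hm1
    have hm0 : (0:ℝ) < m := by exact_mod_cast Nat.lt_of_lt_of_le Nat.zero_lt_one hm1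
    unfold aVal
    field_simp
  have h3 : Tendsto (fun m => pv c (aVal f lam m (u m) (v m))) atTop
      (nhds (pv c (κ * f x))) :=
    ((continuous_pv c).tendsto (κ * f x)).comp haV
  apply h3.congr'
  filter_upwards [hval] with m hvm
  rw [pG, if_pos ⟨hvm.1, hvm.2.1, hvm.2.2.1, hvm.2.2.2⟩]

end Analysis

end PerimHelper

namespace PerimHelper

section Analysis2

variable (c : ℕ) (κ : ℝ) (f : ℝ × ℝ → ℝ) (lam : ℕ → ℝ)

lemma idx_eventually {t : ℝ} (ht : t ∈ Set.Ioo (0:ℝ) 1) :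
    ∀ᶠ m : ℕ in atTop, 2 ≤ idx m t ∧ idx m t + 1 ≤ m := by
  have h1 : Tendsto (fun m : ℕ => (m:ℝ)) atTop atTop := tendsto_natCast_atTop_atTop
  have hev1 : ∀ᶠ m : ℕ in atTop, 2 ≤ (m:ℝ) * t :=
    (h1.atTop_mul_const ht.1).eventually_ge_atTop 2
  have hev2 : ∀ᶠ m : ℕ in atTop, 2 ≤ (m:ℝ) * (1 - t) :=
    (h1.atTop_mul_const (by linarith [ht.2] : (0:ℝ) < 1 - t)).eventually_ge_atTop 2
  filter_upwards [hev1, hev2, eventually_ge_atTop 1] with m h2 h3 hm1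
  have hm0 : (0:ℝ) < m := by exact_mod_cast Nat.lt_of_lt_of_le Nat.zero_lt_one hm1
  have hmem : t ∈ cellIv m (idx m t) := mem_cellIv_idx hm1 ⟨ht.1.le, ht.2.le⟩
  have hb := cellIv_subset_Icc m (idx m t) hmem
  have hup : t * m ≤ (idx m t : ℝ) := (le_div_iff₀ hm0).mp hb.2
  have hlow : (idx m t : ℝ) - 1 ≤ t * m := (div_le_iff₀ hm0).mp hb.1
  constructor
  · have : (2:ℝ) ≤ (idx m t : ℝ) := by nlinarith
    exact_mod_cast this
  · have : (idx m t : ℝ) + 1 ≤ (m:ℝ) := by nlinarith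
    exact_mod_cast this

lemma cellIv_close {t : ℝ} (ht : t ∈ Set.Icc (0:ℝ) 1) {δ : ℝ} (hδ : 0 < δ) (u : ℕ → ℕ)
    (hu : ∀ᶠ m : ℕ in atTop, ((idx m t : ℝ) - 1 ≤ u m) ∧ ((u m : ℝ) ≤ idx m t + 1)) :
    ∀ᶠ m : ℕ in atTop, ∀ y ∈ cellIv m (u m), |y - t| < δ := by
  have hev : ∀ᶠ m : ℕ in atTop, 3 < (m:ℝ) * δ :=
    (tendsto_natCast_atTop_atTop.atTop_mul_const hδ).eventually_gt_atTop 3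
  filter_upwards [hu, hev, eventually_ge_atTop 1] with m hum hm3 hm1
  intro y hy
  have hm0 : (0:ℝ) < m := by exact_mod_cast Nat.lt_of_lt_of_le Nat.zero_lt_one hm1
  have hyb := cellIv_subset_Icc m (u m) hy
  have htb := cellIv_subset_Icc m (idx m t) (mem_cellIv_idx hm1 ht)
  have h1 : y * m ≤ (u m : ℝ) := (le_div_iff₀ hm0).mp hyb.2
  have h2 : ((u m : ℝ)) - 1 ≤ y * m := (div_le_iff₀ hm0).mp hyb.1
  have h3 : t * m ≤ (idx m t : ℝ) := (le_div_iff₀ hm0).mp htb.2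
  have h4 : ((idx m t : ℝ)) - 1 ≤ t * m := (div_le_iff₀ hm0).mp htb.1
  have hyt : (y - t) * m ≤ 3 := by nlinarith [hum.1, hum.2]
  have hty : (t - y) * m ≤ 3 := by nlinarith [hum.1, hum.2]
  rw [abs_lt]
  constructor
  · nlinarith
  · nlinarith

lemma eV_tendsto_pt (hκ : 0 < κ) (hf_cont : ContinuousOn f unitSq)
    (hlam0 : ∀ m, 3 ≤ m → 0 < lam m)
    (hreg : Tendsto (fun m => lam m / (m : ℝ) ^ 2) atTop (nhds κ))
    {x : ℝ × ℝ} (hx1 : x.1 ∈ Set.Ioo (0:ℝ) 1) (hx2 : x.2 ∈ Set.Ioo (0:ℝ) 1) :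
    Tendsto (fun m => eV c f lam m (idx m x.1) (idx m x.2)) atTop
      (nhds (4 * (qFun c κ f x - qFun c κ f x ^ 2))) := by
  have hx : x ∈ unitSq := ⟨⟨hx1.1.le, hx1.2.le⟩, ⟨hx2.1.le, hx2.2.le⟩⟩
  have key : ∀ (u v : ℕ → ℕ),
      (∀ᶠ m : ℕ in atTop, ((idx m x.1 : ℝ) - 1 ≤ u m) ∧ ((u m:ℝ) ≤ idx m x.1 + 1)
        ∧ 1 ≤ u m ∧ u m ≤ m) →
      (∀ᶠ m : ℕ in atTop, ((idx m x.2 : ℝ) - 1 ≤ v m) ∧ ((v m:ℝ) ≤ idx m x.2 + 1)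
        ∧ 1 ≤ v m ∧ v m ≤ m) →
      Tendsto (fun m => pG c f lam m (u m) (v m)) atTop (nhds (pv c (κ * f x))) := by
    intro u v hu hv
    apply pG_tendsto_of c κ f lam hκ hf_cont hlam0 hreg hx
    · filter_upwards [hu, hv] with m h1 h2
      exact ⟨h1.2.2.1, h1.2.2.2, h2.2.2.1, h2.2.2.2⟩
    · intro δ hδ
      have c1 := cellIv_close (t := x.1) ⟨hx1.1.le, hx1.2.le⟩ hδ u
        (by filter_upwards [hu] with m h; exact ⟨h.1, h.2.1⟩)
      have c2 := cellIv_close (t := x.2) ⟨hx2.1.le, hx2.2.le⟩ hδ v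
        (by filter_upwards [hv] with m h; exact ⟨h.1, h.2.1⟩)
      filter_upwards [c1, c2] with m h1 h2
      intro y hy
      rw [Metric.mem_ball, Prod.dist_eq, Real.dist_eq, Real.dist_eq]
      exact max_lt (h1 y.1 hy.1) (h2 y.2 hy.2)
  have hI1 := idx_eventually (t := x.1) hx1
  have hI2 := idx_eventually (t := x.2) hx2
  have hu0 : ∀ᶠ m : ℕ in atTop, ((idx m x.1 : ℝ) - 1 ≤ idx m x.1) ∧
      ((idx m x.1 : ℝ) ≤ idx m x.1 + 1) ∧ 1 ≤ idx m x.1 ∧ idx m x.1 ≤ m := by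
    filter_upwards [hI1] with m h
    exact ⟨by linarith, by linarith, by omega, by omega⟩
  have hv0 : ∀ᶠ m : ℕ in atTop, ((idx m x.2 : ℝ) - 1 ≤ idx m x.2) ∧
      ((idx m x.2 : ℝ) ≤ idx m x.2 + 1) ∧ 1 ≤ idx m x.2 ∧ idx m x.2 ≤ m := by
    filter_upwards [hI2] with m h
    exact ⟨by linarith, by linarith, by omega, by omega⟩
  have huL : ∀ᶠ m : ℕ in atTop, ((idx m x.1 : ℝ) - 1 ≤ (idx m x.1 - 1 : ℕ)) ∧
      (((idx m x.1 - 1 : ℕ) : ℝ) ≤ idx m x.1 + 1) ∧ 1 ≤ idx m x.1 - 1 ∧ idx m x.1 - 1 ≤ m := by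
    filter_upwards [hI1] with m h
    have hc : ((idx m x.1 - 1 : ℕ) : ℝ) = (idx m x.1 : ℝ) - 1 := by
      have : 1 ≤ idx m x.1 := by omega
      push_cast [this]; ring
    exact ⟨by rw [hc], by rw [hc]; linarith, by omega, by omega⟩
  have huR : ∀ᶠ m : ℕ in atTop, ((idx m x.1 : ℝ) - 1 ≤ (idx m x.1 + 1 : ℕ)) ∧
      (((idx m x.1 + 1 : ℕ) : ℝ) ≤ idx m x.1 + 1) ∧ 1 ≤ idx m x.1 + 1 ∧ idx m x.1 + 1 ≤ m := by
    filter_upwards [hI1] with m h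
    exact ⟨by push_cast; linarith, by push_cast; linarith, by omega, by omega⟩
  have hvD : ∀ᶠ m : ℕ in atTop, ((idx m x.2 : ℝ) - 1 ≤ (idx m x.2 - 1 : ℕ)) ∧
      (((idx m x.2 - 1 : ℕ) : ℝ) ≤ idx m x.2 + 1) ∧ 1 ≤ idx m x.2 - 1 ∧ idx m x.2 - 1 ≤ m := by
    filter_upwards [hI2] with m h
    have hc : ((idx m x.2 - 1 : ℕ) : ℝ) = (idx m x.2 : ℝ) - 1 := by
      have : 1 ≤ idx m x.2 := by omega
      push_cast [this]; ring
    exact ⟨by rw [hc], by rw [hc]; linarith, by omega, by omega⟩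
  have hvU : ∀ᶠ m : ℕ in atTop, ((idx m x.2 : ℝ) - 1 ≤ (idx m x.2 + 1 : ℕ)) ∧
      (((idx m x.2 + 1 : ℕ) : ℝ) ≤ idx m x.2 + 1) ∧ 1 ≤ idx m x.2 + 1 ∧ idx m x.2 + 1 ≤ m := by
    filter_upwards [hI2] with m h
    exact ⟨by push_cast; linarith, by push_cast; linarith, by omega, by omega⟩
  have h00 := key _ _ hu0 hv0
  have hL := key _ _ huL hv0
  have hR := key _ _ huR hv0
  have hD := key _ _ hu0 hvD
  have hU := key _ _ hu0 hvU
  have hcomb := h00.mul (tendsto_const_nhds (x := (4:ℝ)) |>.sub (((hL.add hR).add hD).add hU))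
  have hvalg : pv c (κ * f x) = 1 - qFun c κ f x := by
    rw [pv, qS_eq_qFun]
  rw [hvalg] at hcomb
  have htarget : (1 - qFun c κ f x) * (4 - ((((1 - qFun c κ f x) + (1 - qFun c κ f x))
      + (1 - qFun c κ f x)) + (1 - qFun c κ f x)))
      = 4 * (qFun c κ f x - qFun c κ f x ^ 2) := by ring
  rw [htarget] at hcomb
  exact hcomb.congr (fun m => by simp only [eV])

end Analysis2

end PerimHelper

namespace PerimHelper

section Analysis3

variable (c : ℕ) (κ : ℝ) (f : ℝ × ℝ → ℝ) (lam : ℕ → ℝ)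

lemma measurable_idx (m : ℕ) : Measurable (fun t : ℝ => idx m t) := by
  apply Measurable.min measurable_const
  exact (Nat.measurable_floor.comp (measurable_id.const_mul (m:ℝ))).add measurable_const

lemma measurable_eV_idx (m : ℕ) :
    Measurable (fun x : ℝ × ℝ => eV c f lam m (idx m x.1) (idx m x.2)) := by
  have h1 : Measurable (fun x : ℝ × ℝ => (idx m x.1, idx m x.2)) :=
    ((measurable_idx m).comp measurable_fst).prodMk ((measurable_idx m).comp measurable_snd)
  exact (measurable_of_countable (fun p : ℕ × ℕ => eV c f lam m p.1 p.2)).comp h1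

lemma volume_unitSq_lt_top : volume unitSq < ⊤ := isCompact_unitSq.measure_lt_top

lemma muM_eq_integral {m : ℕ} (hm : 1 ≤ m) :
    muM c f lam m = ∫ x in unitSq, eV c f lam m (idx m x.1) (idx m x.2) := by
  have hvol : ∀ i j : ℕ, volume (cellSet m i j) < ⊤ := by
    intro i j
    rw [volume_cellSet hm]
    exact ENNReal.mul_lt_top ENNReal.ofReal_lt_top ENNReal.ofReal_lt_top
  have heq : ∀ p : ℕ × ℕ, p ∈ (Finset.Icc 1 m ×ˢ Finset.Icc 1 m : Finset (ℕ × ℕ)) →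
      Set.EqOn (fun x : ℝ × ℝ => eV c f lam m (idx m x.1) (idx m x.2))
        (fun _ => eV c f lam m p.1 p.2) (cellSet m p.1 p.2) := by
    intro p hp x hx
    rw [Finset.mem_product, Finset.mem_Icc, Finset.mem_Icc] at hp
    simp only
    rw [idx_eq_of_mem hp.1.1 hp.1.2 hx.1, idx_eq_of_mem hp.2.1 hp.2.2 hx.2]
  rw [unitSq_eq_biUnion hm]
  rw [integral_biUnion_finset _ (fun p _ => measurableSet_cellSet m p.1 p.2)
    (cellSet_pairwise_disjoint) ?hint]
  case hint =>
    intro p hp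
    apply IntegrableOn.congr_fun (integrableOn_const (hvol p.1 p.2).ne)
      (heq p hp).symm (measurableSet_cellSet m p.1 p.2)
  have : ∀ p ∈ (Finset.Icc 1 m ×ˢ Finset.Icc 1 m : Finset (ℕ × ℕ)),
      ∫ x in cellSet m p.1 p.2, eV c f lam m (idx m x.1) (idx m x.2)
        = (1/(m:ℝ)^2) * eV c f lam m p.1 p.2 := by
    intro p hp
    rw [setIntegral_congr_fun (measurableSet_cellSet m p.1 p.2) (heq p hp),
      setIntegral_const, smul_eq_mul, measureReal_def, volume_cellSet_toReal hm]
  rw [Finset.sum_congr rfl this, muM, Finset.mul_sum]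

lemma ae_interior : ∀ᵐ x ∂(volume.restrict unitSq),
    x.1 ∈ Set.Ioo (0:ℝ) 1 ∧ x.2 ∈ Set.Ioo (0:ℝ) 1 := by
  rw [ae_restrict_iff' measurableSet_unitSq]
  rw [MeasureTheory.ae_iff]
  have hnull : volume (({(0:ℝ)} ×ˢ (Set.univ : Set ℝ)) ∪ ({(1:ℝ)} ×ˢ (Set.univ : Set ℝ))
      ∪ ((Set.univ : Set ℝ) ×ˢ {(0:ℝ)}) ∪ ((Set.univ : Set ℝ) ×ˢ {(1:ℝ)})) = 0 := by
    have hz : ∀ (a : ℝ), volume (({a} : Set ℝ) ×ˢ (Set.univ : Set ℝ)) = 0 := by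
      intro a
      rw [MeasureTheory.Measure.volume_eq_prod, MeasureTheory.Measure.prod_prod]
      simp
    have hz' : ∀ (a : ℝ), volume ((Set.univ : Set ℝ) ×ˢ ({a} : Set ℝ)) = 0 := by
      intro a
      rw [MeasureTheory.Measure.volume_eq_prod, MeasureTheory.Measure.prod_prod]
      simp
    refine measure_union_null (measure_union_null (measure_union_null ?_ ?_) ?_) ?_
    · exact hz 0
    · exact hz 1
    · exact hz' 0
    · exact hz' 1
  apply measure_mono_null _ hnull
  · intro x hx
    simp only [Set.mem_setOf_eq, not_forall] at hx
    obtain ⟨hxu, hx2⟩ := hx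
    have h1 := hxu.1
    have h2 := hxu.2
    simp only [Set.mem_Icc] at h1 h2
    simp only [Set.mem_Ioo, not_and_or] at hx2
    simp only [Set.mem_union, Set.mem_prod, Set.mem_singleton_iff, Set.mem_univ, and_true,
      true_and]
    rcases hx2 with h | h
    · rcases h with h' | h'
      · left; left; left; linarith [not_lt.mp h', h1.1]
      · left; left; right; linarith [not_lt.mp h', h1.2]
    · rcases h with h' | h'
      · left; right; linarith [not_lt.mp h', h2.1]
      · right; linarith [not_lt.mp h', h2.2]

lemma continuousOn_qFun (hf_cont : ContinuousOn f unitSq) :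
    ContinuousOn (qFun c κ f) unitSq := by
  apply continuousOn_finset_sum
  intro k _
  apply ContinuousOn.mul
  · exact (continuousOn_const.mul (hf_cont.pow k))
  · exact Real.continuous_exp.comp_continuousOn (continuousOn_const.mul hf_cont).neg

lemma muM_tendsto (hc : 1 ≤ c) (hκ : 0 < κ) (hf_cont : ContinuousOn f unitSq)
    (hf_nonneg : ∀ x ∈ unitSq, 0 ≤ f x)
    (hlam0 : ∀ m, 3 ≤ m → 0 < lam m)
    (hreg : Tendsto (fun m => lam m / (m : ℝ) ^ 2) atTop (nhds κ)) :
    Tendsto (fun m => muM c f lam m) atTop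
      (nhds (4 * ((∫ x in unitSq, qFun c κ f x) - ∫ x in unitSq, (qFun c κ f x) ^ 2))) := by
  have hq_cont := continuousOn_qFun c κ f hf_cont
  have hq_int : IntegrableOn (qFun c κ f) unitSq := hq_cont.integrableOn_compact isCompact_unitSq
  have hq2_int : IntegrableOn (fun x => (qFun c κ f x) ^ 2) unitSq :=
    (hq_cont.pow 2).integrableOn_compact isCompact_unitSq
  have htarget : ∫ x in unitSq, 4 * (qFun c κ f x - qFun c κ f x ^ 2)
      = 4 * ((∫ x in unitSq, qFun c κ f x) - ∫ x in unitSq, (qFun c κ f x) ^ 2) := by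
    rw [MeasureTheory.integral_const_mul, integral_sub hq_int hq2_int]
  have hDCT : Tendsto (fun m : ℕ => ∫ x in unitSq, eV c f lam m (idx m x.1) (idx m x.2))
      atTop (nhds (∫ x in unitSq, 4 * (qFun c κ f x - qFun c κ f x ^ 2))) := by
    apply MeasureTheory.tendsto_integral_filter_of_dominated_convergence (fun _ => (4:ℝ))
    · exact Eventually.of_forall (fun m =>
        (measurable_eV_idx c f lam m).aestronglyMeasurable)
    · filter_upwards [eventually_ge_atTop 3] with m hm
      apply Eventually.of_forall
      intro x
      exact eV_abs_le c f lam hf_nonneg (hlam0 m hm).le _ _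
    · exact integrableOn_const volume_unitSq_lt_top.ne
    · filter_upwards [ae_interior] with x hx
      exact eV_tendsto_pt c κ f lam hκ hf_cont hlam0 hreg hx.1 hx.2
  rw [htarget] at hDCT
  apply hDCT.congr'
  filter_upwards [eventually_ge_atTop 1] with m hm
  exact (muM_eq_integral c f lam hm).symm

end Analysis3

end PerimHelper

namespace PerimHelper

def psiP (c m : ℕ) (Yf : ℕ → ℕ → ℕ) (i j : ℕ) : ℝ :=
  if binZ c m Yf i j = 1 then
    4 - (binZ c m Yf (i - 1) j + binZ c m Yf (i + 1) j + binZ c m Yf i (j - 1)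
      + binZ c m Yf i (j + 1))
  else 0

def Pm (m : ℕ) : Finset (ℕ × ℕ) := Finset.Icc 1 m ×ˢ Finset.Icc 1 m

section ProbBasic

variable {Ω : Type*} [MeasureSpace Ω] [IsProbabilityMeasure (ℙ : Measure Ω)]

lemma binZ_mem (c m : ℕ) (Yf : ℕ → ℕ → ℕ) (i j : ℕ) :
    binZ c m Yf i j = 0 ∨ binZ c m Yf i j = 1 := by
  unfold binZ; split
  · right; rfl
  · left; rfl

lemma binZ_nonneg (c m : ℕ) (Yf : ℕ → ℕ → ℕ) (i j : ℕ) : 0 ≤ binZ c m Yf i j := by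
  rcases binZ_mem c m Yf i j with h | h <;> rw [h] <;> norm_num

lemma binZ_le_one (c m : ℕ) (Yf : ℕ → ℕ → ℕ) (i j : ℕ) : binZ c m Yf i j ≤ 1 := by
  rcases binZ_mem c m Yf i j with h | h <;> rw [h] <;> norm_num

lemma psiP_eq (c m : ℕ) (Yf : ℕ → ℕ → ℕ) (i j : ℕ) :
    psiP c m Yf i j = binZ c m Yf i j * (4 - (binZ c m Yf (i-1) j + binZ c m Yf (i+1) j
      + binZ c m Yf i (j-1) + binZ c m Yf i (j+1))) := by
  unfold psiP
  rcases binZ_mem c m Yf i j with h | h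
  · rw [if_neg (by rw [h]; norm_num), h]; ring
  · rw [if_pos h, h]; ring

lemma psiP_abs_le (c m : ℕ) (Yf : ℕ → ℕ → ℕ) (i j : ℕ) : ‖psiP c m Yf i j‖ ≤ 4 := by
  rw [psiP_eq, Real.norm_eq_abs, abs_le]
  have h0l := binZ_nonneg c m Yf i j
  have h0u := binZ_le_one c m Yf i j
  have h1l := binZ_nonneg c m Yf (i-1) j
  have h1u := binZ_le_one c m Yf (i-1) j
  have h2l := binZ_nonneg c m Yf (i+1) j
  have h2u := binZ_le_one c m Yf (i+1) j
  have h3l := binZ_nonneg c m Yf i (j-1)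
  have h3u := binZ_le_one c m Yf i (j-1)
  have h4l := binZ_nonneg c m Yf i (j+1)
  have h4u := binZ_le_one c m Yf i (j+1)
  constructor <;> nlinarith

lemma perim_eq (c m : ℕ) (Yf : ℕ → ℕ → ℕ) :
    (1/(m:ℝ)) * perimSum m (binZ c m Yf)
      = (1/(m:ℝ)^2) * ∑ p ∈ Pm m, psiP c m Yf p.1 p.2 := by
  rw [perimSum, Pm, Finset.sum_product]
  simp only [psiP]
  ring

variable (Y : ℕ → ℕ → ℕ → Ω → ℕ)

lemma measurable_binZ_om (hmeas : ∀ m i j, Measurable (Y m i j)) (c m i j : ℕ) :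
    Measurable (fun ω => binZ c m (fun a b => Y m a b ω) i j) := by
  unfold binZ
  by_cases hstat : 1 ≤ i ∧ i ≤ m ∧ 1 ≤ j ∧ j ≤ m
  · have heq : (fun ω => if 1 ≤ i ∧ i ≤ m ∧ 1 ≤ j ∧ j ≤ m ∧ c ≤ Y m i j ω then (1:ℝ) else 0)
        = fun ω => if c ≤ Y m i j ω then (1:ℝ) else 0 := by
      funext ω
      by_cases h : c ≤ Y m i j ω
      · rw [if_pos ⟨hstat.1, hstat.2.1, hstat.2.2.1, hstat.2.2.2, h⟩, if_pos h]
      · rw [if_neg (by tauto), if_neg h]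
    rw [heq]
    exact Measurable.ite ((hmeas m i j) measurableSet_Ici) measurable_const measurable_const
  · have heq : (fun ω => if 1 ≤ i ∧ i ≤ m ∧ 1 ≤ j ∧ j ≤ m ∧ c ≤ Y m i j ω then (1:ℝ) else 0)
        = fun _ => (0:ℝ) := by
      funext ω; rw [if_neg (by tauto)]
    rw [heq]; exact measurable_const

lemma measurable_psi_om (hmeas : ∀ m i j, Measurable (Y m i j)) (c m i j : ℕ) :
    Measurable (fun ω => psiP c m (fun a b => Y m a b ω) i j) := by
  unfold psiP
  apply Measurable.ite
  · exact (measurable_binZ_om Y hmeas c m i j) (measurableSet_singleton 1)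
  · apply Measurable.const_sub
    exact (((measurable_binZ_om Y hmeas c m (i-1) j).add
      (measurable_binZ_om Y hmeas c m (i+1) j)).add
      (measurable_binZ_om Y hmeas c m i (j-1))).add
      (measurable_binZ_om Y hmeas c m i (j+1))
  · exact measurable_const

lemma integrable_bdd {g : Ω → ℝ} (hg : Measurable g) {C : ℝ} (hb : ∀ ω, ‖g ω‖ ≤ C) :
    Integrable g ℙ :=
  (integrable_const C).mono' hg.aestronglyMeasurable (Eventually.of_forall hb)

end ProbBasic

section ProbExp

variable {Ω : Type*} [MeasureSpace Ω] [IsProbabilityMeasure (ℙ : Measure Ω)]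

lemma prob_ge (c : ℕ) (f : ℝ × ℝ → ℝ) (lam : ℕ → ℝ)
    (hf_nonneg : ∀ x ∈ unitSq, 0 ≤ f x)
    {m : ℕ} (hlam : 0 < lam m)
    (W : ℕ → ℕ → Ω → ℕ) (hmeas : ∀ i j, Measurable (W i j))
    (hpois : ∀ i ∈ Finset.Icc 1 m, ∀ j ∈ Finset.Icc 1 m, ∀ k : ℕ,
      ℙ {ω | W i j ω = k} =
        ENNReal.ofReal (Real.exp (-(lam m * ∫ x in cellSet m i j, f x)) *
          (lam m * ∫ x in cellSet m i j, f x) ^ k / (Nat.factorial k : ℝ)))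
    {i j : ℕ} (hi : i ∈ Finset.Icc 1 m) (hj : j ∈ Finset.Icc 1 m) :
    ℙ {ω | c ≤ W i j ω} = ENNReal.ofReal (pv c (aVal f lam m i j)) := by
  have ha : 0 ≤ aVal f lam m i j :=
    mul_nonneg hlam.le (cellInt_nonneg f hf_nonneg hi hj)
  have hq0 : 0 ≤ qS c (aVal f lam m i j) := qS_nonneg c ha
  have hmeask : ∀ k : ℕ, MeasurableSet {ω | W i j ω = k} :=
    fun k => (hmeas i j) (measurableSet_singleton k)
  have hS : MeasurableSet {ω | c ≤ W i j ω} := (hmeas i j) measurableSet_Ici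
  have hC : {ω | c ≤ W i j ω}ᶜ = ⋃ k ∈ Finset.range c, {ω | W i j ω = k} := by
    ext ω
    simp only [Set.mem_compl_iff, Set.mem_setOf_eq, not_le, Set.mem_iUnion,
      Finset.mem_range, exists_prop]
    constructor
    · intro h; exact ⟨W i j ω, by omega, rfl⟩
    · rintro ⟨k, hk, hW⟩; omega
  have hcompl : ℙ ({ω | c ≤ W i j ω}ᶜ) = ENNReal.ofReal (qS c (aVal f lam m i j)) := by
    rw [hC, measure_biUnion_finset ?hd (fun k _ => hmeask k)]
    case hd =>
      intro k _ l _ hkl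
      rw [Function.onFun, Set.disjoint_left]
      intro ω h1 h2
      simp only [Set.mem_setOf_eq] at h1 h2
      exact hkl (h1.symm.trans h2)
    rw [qS, ENNReal.ofReal_sum_of_nonneg (fun k _ => by positivity)]
    apply Finset.sum_congr rfl
    intro k hk
    rw [hpois i hi j hj k]
    rfl
  have h1 : ℙ {ω | c ≤ W i j ω} = 1 - ℙ ({ω | c ≤ W i j ω}ᶜ) := by
    have := prob_compl_eq_one_sub (μ := ℙ) hS.compl
    rw [compl_compl] at this
    rw [this, hcompl]
  rw [h1, hcompl, pv, ENNReal.ofReal_sub _ hq0, ENNReal.ofReal_one]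

lemma binZ_indicator {c m : ℕ} (W : ℕ → ℕ → Ω → ℕ) {i j : ℕ}
    (hi : i ∈ Finset.Icc 1 m) (hj : j ∈ Finset.Icc 1 m) :
    (fun ω => binZ c m (fun a b => W a b ω) i j)
      = Set.indicator {ω | c ≤ W i j ω} (fun _ => (1:ℝ)) := by
  rw [Finset.mem_Icc] at hi hj
  funext ω
  by_cases h : c ≤ W i j ω
  · rw [Set.indicator_of_mem (show ω ∈ {ω | c ≤ W i j ω} from h), binZ,
      if_pos ⟨hi.1, hi.2, hj.1, hj.2, h⟩]
  · rw [Set.indicator_of_notMem (show ω ∉ {ω | c ≤ W i j ω} from h), binZ,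
      if_neg (by tauto)]

lemma integral_binZ (c : ℕ) (f : ℝ × ℝ → ℝ) (lam : ℕ → ℝ)
    (hf_nonneg : ∀ x ∈ unitSq, 0 ≤ f x)
    {m : ℕ} (hlam : 0 < lam m)
    (W : ℕ → ℕ → Ω → ℕ) (hmeas : ∀ i j, Measurable (W i j))
    (hpois : ∀ i ∈ Finset.Icc 1 m, ∀ j ∈ Finset.Icc 1 m, ∀ k : ℕ,
      ℙ {ω | W i j ω = k} =
        ENNReal.ofReal (Real.exp (-(lam m * ∫ x in cellSet m i j, f x)) *
          (lam m * ∫ x in cellSet m i j, f x) ^ k / (Nat.factorial k : ℝ)))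
    {i j : ℕ} (hi : i ∈ Finset.Icc 1 m) (hj : j ∈ Finset.Icc 1 m) :
    ∫ ω, binZ c m (fun a b => W a b ω) i j ∂ℙ = pG c f lam m i j := by
  have ha : 0 ≤ aVal f lam m i j :=
    mul_nonneg hlam.le (cellInt_nonneg f hf_nonneg hi hj)
  have hS : MeasurableSet {ω | c ≤ W i j ω} := (hmeas i j) measurableSet_Ici
  rw [binZ_indicator W hi hj, MeasureTheory.integral_indicator_const (1:ℝ) hS, measureReal_def,
    prob_ge c f lam hf_nonneg hlam W hmeas hpois hi hj, smul_eq_mul, mul_one,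
    ENNReal.toReal_ofReal (pv_mem c ha).1]
  rw [Finset.mem_Icc] at hi hj
  rw [pG, if_pos ⟨hi.1, hi.2, hj.1, hj.2⟩]

end ProbExp

end PerimHelper

namespace PerimHelper

section ProbExp2

variable {Ω : Type*} [MeasureSpace Ω] [IsProbabilityMeasure (ℙ : Measure Ω)]

lemma binZ_zero_of_invalid {c m : ℕ} (Yf : ℕ → ℕ → ℕ) {i j : ℕ}
    (h : ¬(1 ≤ i ∧ i ≤ m ∧ 1 ≤ j ∧ j ≤ m)) : binZ c m Yf i j = 0 := by
  rw [binZ, if_neg (by tauto)]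

lemma binZ_comp {c m : ℕ} (W : ℕ → ℕ → Ω → ℕ) {i j : ℕ}
    (hi : 1 ≤ i ∧ i ≤ m) (hj : 1 ≤ j ∧ j ≤ m) :
    (fun ω => binZ c m (fun a b => W a b ω) i j)
      = (fun n : ℕ => if c ≤ n then (1:ℝ) else 0) ∘ (W i j) := by
  funext ω
  simp only [Function.comp_apply, binZ]
  by_cases h : c ≤ W i j ω
  · rw [if_pos ⟨hi.1, hi.2, hj.1, hj.2, h⟩, if_pos h]
  · rw [if_neg (by tauto), if_neg h]

lemma integral_binZ_mul (c : ℕ) (f : ℝ × ℝ → ℝ) (lam : ℕ → ℝ)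
    (hf_nonneg : ∀ x ∈ unitSq, 0 ≤ f x)
    {m : ℕ} (hlam : 0 < lam m)
    (W : ℕ → ℕ → Ω → ℕ) (hmeas : ∀ i j, Measurable (W i j))
    (hpois : ∀ i ∈ Finset.Icc 1 m, ∀ j ∈ Finset.Icc 1 m, ∀ k : ℕ,
      ℙ {ω | W i j ω = k} =
        ENNReal.ofReal (Real.exp (-(lam m * ∫ x in cellSet m i j, f x)) *
          (lam m * ∫ x in cellSet m i j, f x) ^ k / (Nat.factorial k : ℝ)))
    (hind : iIndepFun
      (fun q : (Finset.Icc 1 m ×ˢ Finset.Icc 1 m : Finset (ℕ × ℕ)) =>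
        fun ω => W q.1.1 q.1.2 ω) ℙ)
    {i j : ℕ} (hi : i ∈ Finset.Icc 1 m) (hj : j ∈ Finset.Icc 1 m) (k l : ℕ)
    (hne : (i, j) ≠ (k, l)) :
    ∫ ω, (binZ c m (fun a b => W a b ω) i j * binZ c m (fun a b => W a b ω) k l) ∂ℙ
      = pG c f lam m i j * pG c f lam m k l := by
  by_cases hv : 1 ≤ k ∧ k ≤ m ∧ 1 ≤ l ∧ l ≤ m
  · have hk : k ∈ Finset.Icc 1 m := Finset.mem_Icc.mpr ⟨hv.1, hv.2.1⟩
    have hl : l ∈ Finset.Icc 1 m := Finset.mem_Icc.mpr ⟨hv.2.2.1, hv.2.2.2⟩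
    have hij : (i, j) ∈ (Finset.Icc 1 m ×ˢ Finset.Icc 1 m : Finset (ℕ × ℕ)) :=
      Finset.mem_product.mpr ⟨hi, hj⟩
    have hkl : (k, l) ∈ (Finset.Icc 1 m ×ˢ Finset.Icc 1 m : Finset (ℕ × ℕ)) :=
      Finset.mem_product.mpr ⟨hk, hl⟩
    have hIF : IndepFun (W i j) (W k l) ℙ := by
      have := hind.indepFun (i := ⟨(i, j), hij⟩) (j := ⟨(k, l), hkl⟩)
        (fun h => hne (congrArg Subtype.val h))
      exact this
    have hg : Measurable (fun n : ℕ => if c ≤ n then (1:ℝ) else 0) :=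
      measurable_of_countable _
    have hIndZ := hIF.comp hg hg
    rw [Finset.mem_Icc] at hi hj
    have e1 := binZ_comp (c := c) (m := m) W hi hj
    have e2 := binZ_comp (c := c) (m := m) W ⟨hv.1, hv.2.1⟩ ⟨hv.2.2.1, hv.2.2.2⟩
    have hint1 : Integrable ((fun n : ℕ => if c ≤ n then (1:ℝ) else 0) ∘ (W i j)) ℙ := by
      rw [← e1]
      apply integrable_bdd (measurable_binZ_om (fun _ => W) (fun _ => hmeas) c m i j)
      intro ω
      rw [Real.norm_eq_abs, abs_of_nonneg (binZ_nonneg _ _ _ _ _)]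
      exact binZ_le_one _ _ _ _ _
    have hint2 : Integrable ((fun n : ℕ => if c ≤ n then (1:ℝ) else 0) ∘ (W k l)) ℙ := by
      rw [← e2]
      apply integrable_bdd (measurable_binZ_om (fun _ => W) (fun _ => hmeas) c m k l)
      intro ω
      rw [Real.norm_eq_abs, abs_of_nonneg (binZ_nonneg _ _ _ _ _)]
      exact binZ_le_one _ _ _ _ _
    have hmul := hIndZ.integral_mul_eq_mul_integral hint1.1 hint2.1
    have : (fun ω => binZ c m (fun a b => W a b ω) i j * binZ c m (fun a b => W a b ω) k l)
        = ((fun n : ℕ => if c ≤ n then (1:ℝ) else 0) ∘ (W i j))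
          * ((fun n : ℕ => if c ≤ n then (1:ℝ) else 0) ∘ (W k l)) := by
      funext ω
      rw [Pi.mul_apply, ← e1, ← e2]
    rw [this, hmul, ← e1, ← e2]
    rw [integral_binZ c f lam hf_nonneg hlam W hmeas hpois (Finset.mem_Icc.mpr hi)
        (Finset.mem_Icc.mpr hj),
      integral_binZ c f lam hf_nonneg hlam W hmeas hpois hk hl]
  · have hz : ∀ ω, binZ c m (fun a b => W a b ω) k l = 0 :=
      fun ω => binZ_zero_of_invalid _ hv
    have : (fun ω => binZ c m (fun a b => W a b ω) i j * binZ c m (fun a b => W a b ω) k l)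
        = fun _ => (0:ℝ) := by
      funext ω; rw [hz ω, mul_zero]
    have hpg : pG c f lam m k l = 0 := by rw [pG, if_neg hv]
    rw [this, integral_zero, hpg, mul_zero]

lemma integral_psi (c : ℕ) (f : ℝ × ℝ → ℝ) (lam : ℕ → ℝ)
    (hf_nonneg : ∀ x ∈ unitSq, 0 ≤ f x)
    {m : ℕ} (hlam : 0 < lam m)
    (W : ℕ → ℕ → Ω → ℕ) (hmeas : ∀ i j, Measurable (W i j))
    (hpois : ∀ i ∈ Finset.Icc 1 m, ∀ j ∈ Finset.Icc 1 m, ∀ k : ℕ,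
      ℙ {ω | W i j ω = k} =
        ENNReal.ofReal (Real.exp (-(lam m * ∫ x in cellSet m i j, f x)) *
          (lam m * ∫ x in cellSet m i j, f x) ^ k / (Nat.factorial k : ℝ)))
    (hind : iIndepFun
      (fun q : (Finset.Icc 1 m ×ˢ Finset.Icc 1 m : Finset (ℕ × ℕ)) =>
        fun ω => W q.1.1 q.1.2 ω) ℙ)
    {i j : ℕ} (hi : i ∈ Finset.Icc 1 m) (hj : j ∈ Finset.Icc 1 m) :
    ∫ ω, psiP c m (fun a b => W a b ω) i j ∂ℙ = eV c f lam m i j := by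
  have hmm : ∀ a b : ℕ, Measurable (fun ω => binZ c m (fun a' b' => W a' b' ω) a b) :=
    fun a b => measurable_binZ_om (fun _ => W) (fun _ => hmeas) c m a b
  have hbd : ∀ a b : ℕ, ∀ ω, ‖binZ c m (fun a' b' => W a' b' ω) a b‖ ≤ 1 := by
    intro a b ω
    rw [Real.norm_eq_abs, abs_of_nonneg (binZ_nonneg _ _ _ _ _)]
    exact binZ_le_one _ _ _ _ _
  have hintZ : ∀ a b : ℕ, Integrable (fun ω => binZ c m (fun a' b' => W a' b' ω) a b) ℙ :=
    fun a b => integrable_bdd (hmm a b) (hbd a b)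
  have hintZZ : ∀ a b : ℕ, Integrable (fun ω => binZ c m (fun a' b' => W a' b' ω) i j
      * binZ c m (fun a' b' => W a' b' ω) a b) ℙ := by
    intro a b
    apply integrable_bdd ((hmm i j).mul (hmm a b))
    intro ω
    rw [Real.norm_eq_abs, Pi.mul_apply, abs_mul]
    calc |binZ c m (fun a' b' => W a' b' ω) i j| * |binZ c m (fun a' b' => W a' b' ω) a b|
        ≤ 1 * 1 := by
          apply mul_le_mul _ _ (abs_nonneg _) zero_le_one
          · rw [← Real.norm_eq_abs]; exact hbd i j ω
          · rw [← Real.norm_eq_abs]; exact hbd a b ω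
      _ = 1 := by norm_num
  have hrw : (fun ω => psiP c m (fun a b => W a b ω) i j)
      = fun ω => (4 * binZ c m (fun a b => W a b ω) i j
        - binZ c m (fun a b => W a b ω) i j * binZ c m (fun a b => W a b ω) (i-1) j)
        - binZ c m (fun a b => W a b ω) i j * binZ c m (fun a b => W a b ω) (i+1) j
        - binZ c m (fun a b => W a b ω) i j * binZ c m (fun a b => W a b ω) i (j-1)
        - binZ c m (fun a b => W a b ω) i j * binZ c m (fun a b => W a b ω) i (j+1) := by
    funext ω
    rw [psiP_eq]
    ring
  rw [Finset.mem_Icc] at hi hj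
  have hne1 : (i, j) ≠ (i - 1, j) := by
    simp only [ne_eq, Prod.mk.injEq, not_and]
    intro h; omega
  have hne2 : (i, j) ≠ (i + 1, j) := by
    simp only [ne_eq, Prod.mk.injEq, not_and]
    intro h; omega
  have hne3 : (i, j) ≠ (i, j - 1) := by
    simp only [ne_eq, Prod.mk.injEq]
    intro h; omega
  have hne4 : (i, j) ≠ (i, j + 1) := by
    simp only [ne_eq, Prod.mk.injEq]
    intro h; omega
  have hA1 : Integrable (fun ω => 4 * binZ c m (fun a' b' => W a' b' ω) i j) ℙ :=
    (hintZ i j).const_mul 4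
  have hA2 : Integrable (fun ω => 4 * binZ c m (fun a' b' => W a' b' ω) i j
      - binZ c m (fun a' b' => W a' b' ω) i j * binZ c m (fun a' b' => W a' b' ω) (i-1) j) ℙ :=
    hA1.sub (hintZZ (i-1) j)
  have hA3 : Integrable (fun ω => (4 * binZ c m (fun a' b' => W a' b' ω) i j
      - binZ c m (fun a' b' => W a' b' ω) i j * binZ c m (fun a' b' => W a' b' ω) (i-1) j)
      - binZ c m (fun a' b' => W a' b' ω) i j * binZ c m (fun a' b' => W a' b' ω) (i+1) j) ℙ :=
    hA2.sub (hintZZ (i+1) j)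
  have hA4 : Integrable (fun ω => ((4 * binZ c m (fun a' b' => W a' b' ω) i j
      - binZ c m (fun a' b' => W a' b' ω) i j * binZ c m (fun a' b' => W a' b' ω) (i-1) j)
      - binZ c m (fun a' b' => W a' b' ω) i j * binZ c m (fun a' b' => W a' b' ω) (i+1) j)
      - binZ c m (fun a' b' => W a' b' ω) i j * binZ c m (fun a' b' => W a' b' ω) i (j-1)) ℙ :=
    hA3.sub (hintZZ i (j-1))
  rw [hrw]
  rw [integral_sub hA4 (hintZZ i (j+1)), integral_sub hA3 (hintZZ i (j-1)),
    integral_sub hA2 (hintZZ (i+1) j), integral_sub hA1 (hintZZ (i-1) j),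
    MeasureTheory.integral_const_mul]
  rw [integral_binZ c f lam hf_nonneg hlam W hmeas hpois (Finset.mem_Icc.mpr hi)
      (Finset.mem_Icc.mpr hj)]
  rw [integral_binZ_mul c f lam hf_nonneg hlam W hmeas hpois hind (Finset.mem_Icc.mpr hi)
      (Finset.mem_Icc.mpr hj) (i-1) j hne1,
    integral_binZ_mul c f lam hf_nonneg hlam W hmeas hpois hind (Finset.mem_Icc.mpr hi)
      (Finset.mem_Icc.mpr hj) (i+1) j hne2,
    integral_binZ_mul c f lam hf_nonneg hlam W hmeas hpois hind (Finset.mem_Icc.mpr hi)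
      (Finset.mem_Icc.mpr hj) i (j-1) hne3,
    integral_binZ_mul c f lam hf_nonneg hlam W hmeas hpois hind (Finset.mem_Icc.mpr hi)
      (Finset.mem_Icc.mpr hj) i (j+1) hne4]
  rw [eV]
  ring

end ProbExp2

end PerimHelper

namespace PerimHelper

section Blocks

def blk (m i j : ℕ) : Finset ((Pm m : Finset (ℕ × ℕ)) : Type) :=
  Finset.univ.filter (fun s => s.1.1 ≤ i + 1 ∧ i ≤ s.1.1 + 1 ∧ s.1.2 ≤ j + 1 ∧ j ≤ s.1.2 + 1)

def lookF (m i j : ℕ) (v : ((blk m i j : Finset _) : Type) → ℕ) (a b : ℕ) : ℕ :=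
  ∑ s : ((blk m i j : Finset _) : Type), if s.1.1 = (a, b) then v s else 0

def FF (c m i j : ℕ) (v : ((blk m i j : Finset _) : Type) → ℕ) : ℝ :=
  psiP c m (lookF m i j v) i j

variable {Ω : Type*} [MeasureSpace Ω] [IsProbabilityMeasure (ℙ : Measure Ω)]

lemma lookF_spec (m i j : ℕ) (W : ℕ → ℕ → Ω → ℕ) (ω : Ω) {a b : ℕ}
    (hab : (a, b) ∈ Pm m)
    (hnear : a ≤ i + 1 ∧ i ≤ a + 1 ∧ b ≤ j + 1 ∧ j ≤ b + 1) :
    lookF m i j (fun s => W s.1.1.1 s.1.1.2 ω) a b = W a b ω := by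
  have hq : (⟨(a, b), hab⟩ : (Pm m : Finset (ℕ × ℕ))) ∈ blk m i j := by
    rw [blk, Finset.mem_filter]
    exact ⟨Finset.mem_univ _, hnear⟩
  rw [lookF, Finset.sum_eq_single (⟨⟨(a, b), hab⟩, hq⟩ :
      ((blk m i j : Finset _) : Type))]
  · rw [if_pos rfl]
  · intro s _ hne
    rw [if_neg]
    intro h
    exact hne (Subtype.ext (Subtype.ext h))
  · intro h
    exact absurd (Finset.mem_univ _) h

lemma psiP_factor (c m : ℕ) (W : ℕ → ℕ → Ω → ℕ) (ω : Ω) {i j : ℕ}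
    (hi : 1 ≤ i) (hj : 1 ≤ j) :
    psiP c m (fun a b => W a b ω) i j = FF c m i j (fun s => W s.1.1.1 s.1.1.2 ω) := by
  have hbin : ∀ a b : ℕ,
      (a ≤ i + 1 ∧ i ≤ a + 1 ∧ b ≤ j + 1 ∧ j ≤ b + 1) →
      binZ c m (fun a' b' => W a' b' ω) a b
        = binZ c m (lookF m i j (fun s => W s.1.1.1 s.1.1.2 ω)) a b := by
    intro a b hnear
    by_cases hv : 1 ≤ a ∧ a ≤ m ∧ 1 ≤ b ∧ b ≤ m
    · have hab : (a, b) ∈ Pm m := by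
        rw [Pm, Finset.mem_product, Finset.mem_Icc, Finset.mem_Icc]
        exact ⟨⟨hv.1, hv.2.1⟩, hv.2.2.1, hv.2.2.2⟩
      rw [binZ, binZ, lookF_spec m i j W ω hab hnear]
    · rw [binZ_zero_of_invalid _ hv, binZ_zero_of_invalid _ hv]
  rw [FF, psiP, psiP]
  rw [hbin i j (by omega), hbin (i-1) j (by omega), hbin (i+1) j (by omega),
    hbin i (j-1) (by omega), hbin i (j+1) (by omega)]

lemma indepFun_psi (c : ℕ) {m : ℕ}
    (W : ℕ → ℕ → Ω → ℕ) (hmeas : ∀ i j, Measurable (W i j))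
    (hind : iIndepFun
      (fun q : (Finset.Icc 1 m ×ˢ Finset.Icc 1 m : Finset (ℕ × ℕ)) =>
        fun ω => W q.1.1 q.1.2 ω) ℙ)
    {p q : ℕ × ℕ} (hp : p ∈ Pm m) (hq : q ∈ Pm m)
    (hfar : ¬(p.1 ≤ q.1 + 2 ∧ q.1 ≤ p.1 + 2 ∧ p.2 ≤ q.2 + 2 ∧ q.2 ≤ p.2 + 2)) :
    IndepFun (fun ω => psiP c m (fun a b => W a b ω) p.1 p.2)
      (fun ω => psiP c m (fun a b => W a b ω) q.1 q.2) ℙ := by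
  have hdisj : Disjoint (blk m p.1 p.2) (blk m q.1 q.2) := by
    rw [Finset.disjoint_left]
    intro s hs1 hs2
    rw [blk, Finset.mem_filter] at hs1 hs2
    apply hfar
    obtain ⟨_, h1, h2, h3, h4⟩ := hs1
    obtain ⟨_, h5, h6, h7, h8⟩ := hs2
    omega
  have hIndep := hind.indepFun_finset (blk m p.1 p.2) (blk m q.1 q.2) hdisj
    (fun s => hmeas s.1.1 s.1.2)
  have hF1 : Measurable (FF c m p.1 p.2) := measurable_of_countable _
  have hF2 : Measurable (FF c m q.1 q.2) := measurable_of_countable _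
  have hcomp := hIndep.comp hF1 hF2
  rw [Pm, Finset.mem_product, Finset.mem_Icc, Finset.mem_Icc] at hp hq
  have he1 : (fun ω => psiP c m (fun a b => W a b ω) p.1 p.2)
      = (FF c m p.1 p.2) ∘ (fun ω (s : ((blk m p.1 p.2 : Finset _) : Type)) =>
          W s.1.1.1 s.1.1.2 ω) := by
    funext ω
    exact psiP_factor c m W ω hp.1.1 hp.2.1
  have he2 : (fun ω => psiP c m (fun a b => W a b ω) q.1 q.2)
      = (FF c m q.1 q.2) ∘ (fun ω (s : ((blk m q.1 q.2 : Finset _) : Type)) =>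
          W s.1.1.1 s.1.1.2 ω) := by
    funext ω
    exact psiP_factor c m W ω hq.1.1 hq.2.1
  rw [he1, he2]
  exact hcomp

end Blocks

end PerimHelper

namespace PerimHelper

section VarBound

variable {Ω : Type*} [MeasureSpace Ω] [IsProbabilityMeasure (ℙ : Measure Ω)]

lemma var_bound (c : ℕ) {m : ℕ}
    (W : ℕ → ℕ → Ω → ℕ) (hmeas : ∀ i j, Measurable (W i j))
    (hind : iIndepFun
      (fun q : (Finset.Icc 1 m ×ˢ Finset.Icc 1 m : Finset (ℕ × ℕ)) =>
        fun ω => W q.1.1 q.1.2 ω) ℙ) :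
    (∫ ω, (∑ p ∈ Pm m, psiP c m (fun a b => W a b ω) p.1 p.2)^2 ∂ℙ)
      - (∫ ω, (∑ p ∈ Pm m, psiP c m (fun a b => W a b ω) p.1 p.2) ∂ℙ)^2
      ≤ 800 * (m:ℝ)^2 := by
  have hmeasψ : ∀ p : ℕ × ℕ, Measurable (fun ω => psiP c m (fun a b => W a b ω) p.1 p.2) :=
    fun p => measurable_psi_om (fun _ => W) (fun _ => hmeas) c m p.1 p.2
  have hbd : ∀ (p : ℕ × ℕ) (ω : Ω), ‖psiP c m (fun a b => W a b ω) p.1 p.2‖ ≤ 4 :=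
    fun p ω => psiP_abs_le c m _ p.1 p.2
  have hintψ : ∀ p : ℕ × ℕ, Integrable (fun ω => psiP c m (fun a b => W a b ω) p.1 p.2) ℙ :=
    fun p => integrable_bdd (hmeasψ p) (hbd p)
  have hbdm : ∀ (p q : ℕ × ℕ) (ω : Ω), ‖psiP c m (fun a b => W a b ω) p.1 p.2
      * psiP c m (fun a b => W a b ω) q.1 q.2‖ ≤ 16 := by
    intro p q ω
    rw [Real.norm_eq_abs, abs_mul]
    calc |psiP c m (fun a b => W a b ω) p.1 p.2| * |psiP c m (fun a b => W a b ω) q.1 q.2|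
        ≤ 4 * 4 := by
          apply mul_le_mul _ _ (abs_nonneg _) (by norm_num)
          · rw [← Real.norm_eq_abs]; exact hbd p ω
          · rw [← Real.norm_eq_abs]; exact hbd q ω
      _ = 16 := by norm_num
  have hintψψ : ∀ p q : ℕ × ℕ, Integrable (fun ω => psiP c m (fun a b => W a b ω) p.1 p.2
      * psiP c m (fun a b => W a b ω) q.1 q.2) ℙ :=
    fun p q => integrable_bdd ((hmeasψ p).mul (hmeasψ q)) (hbdm p q)
  have hES2 : (∫ ω, (∑ p ∈ Pm m, psiP c m (fun a b => W a b ω) p.1 p.2)^2 ∂ℙ)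
      = ∑ p ∈ Pm m, ∑ q ∈ Pm m, ∫ ω, psiP c m (fun a b => W a b ω) p.1 p.2
        * psiP c m (fun a b => W a b ω) q.1 q.2 ∂ℙ := by
    have h1 : (fun ω => (∑ p ∈ Pm m, psiP c m (fun a b => W a b ω) p.1 p.2)^2)
        = fun ω => ∑ p ∈ Pm m, ∑ q ∈ Pm m, psiP c m (fun a b => W a b ω) p.1 p.2
          * psiP c m (fun a b => W a b ω) q.1 q.2 := by
      funext ω
      rw [sq, Finset.sum_mul_sum]
    rw [h1, integral_finset_sum _ (fun p _ => integrable_finset_sum _ (fun q _ => hintψψ p q))]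
    exact Finset.sum_congr rfl (fun p _ => integral_finset_sum _ (fun q _ => hintψψ p q))
  have hES : (∫ ω, (∑ p ∈ Pm m, psiP c m (fun a b => W a b ω) p.1 p.2) ∂ℙ)
      = ∑ p ∈ Pm m, ∫ ω, psiP c m (fun a b => W a b ω) p.1 p.2 ∂ℙ :=
    integral_finset_sum _ (fun p _ => hintψ p)
  rw [hES2, hES, sq, Finset.sum_mul_sum]
  rw [← Finset.sum_sub_distrib]
  have hinner : ∀ p ∈ Pm m,
      (∑ q ∈ Pm m, ∫ ω, psiP c m (fun a b => W a b ω) p.1 p.2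
        * psiP c m (fun a b => W a b ω) q.1 q.2 ∂ℙ)
      - (∑ q ∈ Pm m, (∫ ω, psiP c m (fun a b => W a b ω) p.1 p.2 ∂ℙ)
        * (∫ ω, psiP c m (fun a b => W a b ω) q.1 q.2 ∂ℙ)) ≤ 800 := by
    intro p hp
    rw [← Finset.sum_sub_distrib]
    have hterm : ∀ q ∈ Pm m,
        (∫ ω, psiP c m (fun a b => W a b ω) p.1 p.2
          * psiP c m (fun a b => W a b ω) q.1 q.2 ∂ℙ)
        - (∫ ω, psiP c m (fun a b => W a b ω) p.1 p.2 ∂ℙ)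
          * (∫ ω, psiP c m (fun a b => W a b ω) q.1 q.2 ∂ℙ)
        ≤ (if p.1 ≤ q.1 + 2 ∧ q.1 ≤ p.1 + 2 ∧ p.2 ≤ q.2 + 2 ∧ q.2 ≤ p.2 + 2
            then (32:ℝ) else 0) := by
      intro q hq
      by_cases hnear : p.1 ≤ q.1 + 2 ∧ q.1 ≤ p.1 + 2 ∧ p.2 ≤ q.2 + 2 ∧ q.2 ≤ p.2 + 2
      · rw [if_pos hnear]
        have h16 : ‖∫ ω, psiP c m (fun a b => W a b ω) p.1 p.2
            * psiP c m (fun a b => W a b ω) q.1 q.2 ∂ℙ‖ ≤ 16 := by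
          have := norm_integral_le_of_norm_le_const (μ := ℙ)
            (Eventually.of_forall (hbdm p q))
          simpa using this
        have h4p : ‖∫ ω, psiP c m (fun a b => W a b ω) p.1 p.2 ∂ℙ‖ ≤ 4 := by
          have := norm_integral_le_of_norm_le_const (μ := ℙ)
            (Eventually.of_forall (hbd p))
          simpa using this
        have h4q : ‖∫ ω, psiP c m (fun a b => W a b ω) q.1 q.2 ∂ℙ‖ ≤ 4 := by
          have := norm_integral_le_of_norm_le_const (μ := ℙ)
            (Eventually.of_forall (hbd q))
          simpa using this
        rw [Real.norm_eq_abs, abs_le] at h16 h4p h4q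
        nlinarith [h16.1, h16.2, h4p.1, h4p.2, h4q.1, h4q.2]
      · rw [if_neg hnear]
        have hif := (indepFun_psi c W hmeas hind hp hq hnear).integral_mul_eq_mul_integral
          (hintψ p).1 (hintψ q).1
        have hrw : (fun ω => psiP c m (fun a b => W a b ω) p.1 p.2
            * psiP c m (fun a b => W a b ω) q.1 q.2)
            = (fun ω => psiP c m (fun a b => W a b ω) p.1 p.2)
              * (fun ω => psiP c m (fun a b => W a b ω) q.1 q.2) := rfl
        rw [hrw, hif]
        simp
    calc ∑ q ∈ Pm m, ((∫ ω, psiP c m (fun a b => W a b ω) p.1 p.2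
          * psiP c m (fun a b => W a b ω) q.1 q.2 ∂ℙ)
        - (∫ ω, psiP c m (fun a b => W a b ω) p.1 p.2 ∂ℙ)
          * (∫ ω, psiP c m (fun a b => W a b ω) q.1 q.2 ∂ℙ))
        ≤ ∑ q ∈ Pm m, (if p.1 ≤ q.1 + 2 ∧ q.1 ≤ p.1 + 2 ∧ p.2 ≤ q.2 + 2 ∧ q.2 ≤ p.2 + 2
            then (32:ℝ) else 0) := Finset.sum_le_sum hterm
      _ = ∑ q ∈ (Pm m).filter (fun q => p.1 ≤ q.1 + 2 ∧ q.1 ≤ p.1 + 2 ∧ p.2 ≤ q.2 + 2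
            ∧ q.2 ≤ p.2 + 2), (32:ℝ) := (Finset.sum_filter _ _).symm
      _ = ((Pm m).filter (fun q => p.1 ≤ q.1 + 2 ∧ q.1 ≤ p.1 + 2 ∧ p.2 ≤ q.2 + 2
            ∧ q.2 ≤ p.2 + 2)).card * 32 := by rw [Finset.sum_const, nsmul_eq_mul]
      _ ≤ 25 * 32 := by
          have hsub : (Pm m).filter (fun q => p.1 ≤ q.1 + 2 ∧ q.1 ≤ p.1 + 2 ∧ p.2 ≤ q.2 + 2
              ∧ q.2 ≤ p.2 + 2) ⊆ Finset.Icc (p.1 - 2) (p.1 + 2) ×ˢ Finset.Icc (p.2 - 2)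
              (p.2 + 2) := by
            intro q hq
            rw [Finset.mem_filter] at hq
            rw [Finset.mem_product, Finset.mem_Icc, Finset.mem_Icc]
            omega
          have hcard : ((Pm m).filter (fun q => p.1 ≤ q.1 + 2 ∧ q.1 ≤ p.1 + 2 ∧ p.2 ≤ q.2 + 2
              ∧ q.2 ≤ p.2 + 2)).card ≤ 25 := by
            have h1 := Finset.card_le_card hsub
            rw [Finset.card_product, Nat.card_Icc, Nat.card_Icc] at h1
            refine h1.trans ?_
            have h2 : p.1 + 2 + 1 - (p.1 - 2) ≤ 5 := by omega
            have h3 : p.2 + 2 + 1 - (p.2 - 2) ≤ 5 := by omega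
            calc (p.1 + 2 + 1 - (p.1 - 2)) * (p.2 + 2 + 1 - (p.2 - 2)) ≤ 5 * 5 :=
              Nat.mul_le_mul h2 h3
            _ = 25 := by norm_num
          apply mul_le_mul_of_nonneg_right _ (by norm_num : (0:ℝ) ≤ 32)
          exact_mod_cast hcard
      _ = 800 := by norm_num
  refine (Finset.sum_le_sum hinner).trans ?_
  rw [Finset.sum_const, nsmul_eq_mul]
  have hcard : (Pm m).card = m * m := by
    have h5 : (Finset.Icc 1 m).card = m := by rw [Nat.card_Icc]; omega
    rw [Pm, Finset.card_product, h5]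
  rw [hcard]
  push_cast
  nlinarith [sq_nonneg (m:ℝ)]

end VarBound

end PerimHelper

namespace PerimHelper

section Cheb

variable {Ω : Type*} [MeasureSpace Ω] [IsProbabilityMeasure (ℙ : Measure Ω)]

lemma ET_eq (c : ℕ) (f : ℝ × ℝ → ℝ) (lam : ℕ → ℝ)
    (hf_nonneg : ∀ x ∈ unitSq, 0 ≤ f x)
    {m : ℕ} (hlam : 0 < lam m)
    (W : ℕ → ℕ → Ω → ℕ) (hmeas : ∀ i j, Measurable (W i j))
    (hpois : ∀ i ∈ Finset.Icc 1 m, ∀ j ∈ Finset.Icc 1 m, ∀ k : ℕ,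
      ℙ {ω | W i j ω = k} =
        ENNReal.ofReal (Real.exp (-(lam m * ∫ x in cellSet m i j, f x)) *
          (lam m * ∫ x in cellSet m i j, f x) ^ k / (Nat.factorial k : ℝ)))
    (hind : iIndepFun
      (fun q : (Finset.Icc 1 m ×ˢ Finset.Icc 1 m : Finset (ℕ × ℕ)) =>
        fun ω => W q.1.1 q.1.2 ω) ℙ) :
    ∫ ω, (1/(m:ℝ)^2) * (∑ p ∈ Pm m, psiP c m (fun a b => W a b ω) p.1 p.2) ∂ℙ
      = muM c f lam m := by
  have hintψ : ∀ p : ℕ × ℕ, Integrable (fun ω => psiP c m (fun a b => W a b ω) p.1 p.2) ℙ :=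
    fun p => integrable_bdd (measurable_psi_om (fun _ => W) (fun _ => hmeas) c m p.1 p.2)
      (fun ω => psiP_abs_le c m _ p.1 p.2)
  rw [MeasureTheory.integral_const_mul, integral_finset_sum _ (fun p _ => hintψ p), muM]
  congr 1
  apply Finset.sum_congr rfl
  intro p hp
  rw [Pm, Finset.mem_product] at hp
  exact integral_psi c f lam hf_nonneg hlam W hmeas hpois hind hp.1 hp.2

lemma cheb (c : ℕ) (f : ℝ × ℝ → ℝ) (lam : ℕ → ℝ)
    (hf_nonneg : ∀ x ∈ unitSq, 0 ≤ f x)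
    {m : ℕ} (hm : 3 ≤ m) (hlam : 0 < lam m)
    (W : ℕ → ℕ → Ω → ℕ) (hmeas : ∀ i j, Measurable (W i j))
    (hpois : ∀ i ∈ Finset.Icc 1 m, ∀ j ∈ Finset.Icc 1 m, ∀ k : ℕ,
      ℙ {ω | W i j ω = k} =
        ENNReal.ofReal (Real.exp (-(lam m * ∫ x in cellSet m i j, f x)) *
          (lam m * ∫ x in cellSet m i j, f x) ^ k / (Nat.factorial k : ℝ)))
    (hind : iIndepFun
      (fun q : (Finset.Icc 1 m ×ˢ Finset.Icc 1 m : Finset (ℕ × ℕ)) =>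
        fun ω => W q.1.1 q.1.2 ω) ℙ)
    {ε : ℝ} (hε : 0 < ε) :
    ℙ {ω | ε ≤ |(1/(m:ℝ)^2) * (∑ p ∈ Pm m, psiP c m (fun a b => W a b ω) p.1 p.2)
        - muM c f lam m|}
      ≤ ENNReal.ofReal (800 / (ε^2 * (m:ℝ)^2)) := by
  have hm0 : (0:ℝ) < m := by exact_mod_cast Nat.lt_of_lt_of_le Nat.zero_lt_one (by omega)
  have hmeasψ : ∀ p : ℕ × ℕ, Measurable (fun ω => psiP c m (fun a b => W a b ω) p.1 p.2) :=
    fun p => measurable_psi_om (fun _ => W) (fun _ => hmeas) c m p.1 p.2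
  have hXmeas : Measurable (fun ω => (1/(m:ℝ)^2)
      * (∑ p ∈ Pm m, psiP c m (fun a b => W a b ω) p.1 p.2)) :=
    (Finset.measurable_sum _ (fun p _ => hmeasψ p)).const_mul _
  have hcardP : ((Pm m).card : ℝ) = (m:ℝ)^2 := by
    have h5 : (Finset.Icc 1 m).card = m := by rw [Nat.card_Icc]; omega
    rw [Pm, Finset.card_product, h5]
    push_cast
    ring
  have hXbd : ∀ ω, (fun ω => (1/(m:ℝ)^2)
      * (∑ p ∈ Pm m, psiP c m (fun a b => W a b ω) p.1 p.2)) ω ∈ Set.Icc (-4:ℝ) 4 := by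
    intro ω
    have hsum : |∑ p ∈ Pm m, psiP c m (fun a b => W a b ω) p.1 p.2| ≤ ((Pm m).card : ℝ) * 4 := by
      refine (Finset.abs_sum_le_sum_abs _ _).trans ?_
      have := Finset.sum_le_card_nsmul (Pm m)
        (fun p => |psiP c m (fun a b => W a b ω) p.1 p.2|) 4
        (fun p _ => by rw [← Real.norm_eq_abs]; exact psiP_abs_le c m _ p.1 p.2)
      rwa [nsmul_eq_mul] at this
    rw [hcardP] at hsum
    rw [Set.mem_Icc]
    have habs : |(1/(m:ℝ)^2) * (∑ p ∈ Pm m, psiP c m (fun a b => W a b ω) p.1 p.2)| ≤ 4 := by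
      rw [abs_mul, abs_of_pos (by positivity : (0:ℝ) < 1/(m:ℝ)^2)]
      calc (1/(m:ℝ)^2) * |∑ p ∈ Pm m, psiP c m (fun a b => W a b ω) p.1 p.2|
          ≤ (1/(m:ℝ)^2) * ((m:ℝ)^2 * 4) := by
            apply mul_le_mul_of_nonneg_left hsum (by positivity)
        _ = 4 := by field_simp
    exact abs_le.mp habs
  have hMem : MemLp (fun ω => (1/(m:ℝ)^2)
      * (∑ p ∈ Pm m, psiP c m (fun a b => W a b ω) p.1 p.2)) 2 ℙ :=
    memLp_of_bounded (Eventually.of_forall hXbd) hXmeas.aestronglyMeasurable 2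
  have hET := ET_eq c f lam hf_nonneg hlam W hmeas hpois hind
  have hvar : variance (fun ω => (1/(m:ℝ)^2)
      * (∑ p ∈ Pm m, psiP c m (fun a b => W a b ω) p.1 p.2)) ℙ ≤ 800 / (m:ℝ)^2 := by
    rw [variance_eq_sub hMem]
    have hsq : (fun ω => (1/(m:ℝ)^2)
        * (∑ p ∈ Pm m, psiP c m (fun a b => W a b ω) p.1 p.2))^2
        = fun ω => ((1/(m:ℝ)^2))^2 * (∑ p ∈ Pm m, psiP c m (fun a b => W a b ω) p.1 p.2)^2 := by
      funext ω
      rw [Pi.pow_apply]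
      ring
    rw [hsq, MeasureTheory.integral_const_mul, MeasureTheory.integral_const_mul]
    have hvb := var_bound c W hmeas hind
    have : ((1/(m:ℝ)^2))^2 * (∫ ω, (∑ p ∈ Pm m, psiP c m (fun a b => W a b ω) p.1 p.2)^2 ∂ℙ)
        - ((1/(m:ℝ)^2) * ∫ ω, (∑ p ∈ Pm m, psiP c m (fun a b => W a b ω) p.1 p.2) ∂ℙ)^2
        = ((1/(m:ℝ)^2))^2 * ((∫ ω, (∑ p ∈ Pm m, psiP c m (fun a b => W a b ω) p.1 p.2)^2 ∂ℙ)
          - (∫ ω, (∑ p ∈ Pm m, psiP c m (fun a b => W a b ω) p.1 p.2) ∂ℙ)^2) := by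
      ring
    rw [this]
    calc ((1/(m:ℝ)^2))^2 * ((∫ ω, (∑ p ∈ Pm m, psiP c m (fun a b => W a b ω) p.1 p.2)^2 ∂ℙ)
          - (∫ ω, (∑ p ∈ Pm m, psiP c m (fun a b => W a b ω) p.1 p.2) ∂ℙ)^2)
        ≤ ((1/(m:ℝ)^2))^2 * (800 * (m:ℝ)^2) := by
          apply mul_le_mul_of_nonneg_left hvb (by positivity)
      _ = 800 / (m:ℝ)^2 := by field_simp
  have hcheb := meas_ge_le_variance_div_sq hMem hε
  rw [hET] at hcheb
  refine hcheb.trans ?_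
  apply ENNReal.ofReal_le_ofReal
  have heq : 800 / (ε^2 * (m:ℝ)^2) = (800 / (m:ℝ)^2) / ε^2 := by
    field_simp
  rw [heq]
  gcongr

end Cheb

end PerimHelper

namespace PerimHelper

section AS

variable {Ω : Type*} [MeasureSpace Ω] [IsProbabilityMeasure (ℙ : Measure Ω)]

lemma as_tendsto (c : ℕ) (f : ℝ × ℝ → ℝ) (lam : ℕ → ℝ)
    (hf_nonneg : ∀ x ∈ unitSq, 0 ≤ f x)
    (hlam0 : ∀ m, 3 ≤ m → 0 < lam m)
    (Y : ℕ → ℕ → ℕ → Ω → ℕ)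
    (hmeas : ∀ m i j, Measurable (Y m i j))
    (hpois : ∀ m, 3 ≤ m → ∀ i ∈ Finset.Icc 1 m, ∀ j ∈ Finset.Icc 1 m, ∀ k : ℕ,
      ℙ {ω | Y m i j ω = k} =
        ENNReal.ofReal (Real.exp (-(lam m * ∫ x in cellSet m i j, f x)) *
          (lam m * ∫ x in cellSet m i j, f x) ^ k / (Nat.factorial k : ℝ)))
    (hind : ∀ m, 3 ≤ m → iIndepFun
      (fun q : (Finset.Icc 1 m ×ˢ Finset.Icc 1 m : Finset (ℕ × ℕ)) =>
        fun ω => Y m q.1.1 q.1.2 ω) ℙ) :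
    ∀ᵐ ω ∂ℙ, Tendsto (fun m : ℕ => (1/(m:ℝ)^2)
      * (∑ p ∈ Pm m, psiP c m (fun a b => Y m a b ω) p.1 p.2) - muM c f lam m)
      atTop (nhds 0) := by
  have hAE : ∀ n : ℕ, ∀ᵐ ω ∂ℙ, ∀ᶠ m in atTop,
      ω ∉ (fun m : ℕ => if 3 ≤ m then {ω : Ω | 1/((n:ℝ)+1) ≤ |(1/(m:ℝ)^2)
        * (∑ p ∈ Pm m, psiP c m (fun a b => Y m a b ω) p.1 p.2) - muM c f lam m|}
        else (∅ : Set Ω)) m := by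
    intro n
    apply ae_eventually_notMem
    have hb : ∀ m : ℕ, ℙ ((fun m : ℕ => if 3 ≤ m then {ω : Ω | 1/((n:ℝ)+1) ≤ |(1/(m:ℝ)^2)
        * (∑ p ∈ Pm m, psiP c m (fun a b => Y m a b ω) p.1 p.2) - muM c f lam m|}
        else (∅ : Set Ω)) m)
        ≤ ENNReal.ofReal ((800 * ((n:ℝ)+1)^2) * (1/(m:ℝ)^2)) := by
      intro m
      by_cases h3 : 3 ≤ m
      · simp only [if_pos h3]
        have hm0 : (0:ℝ) < m := by exact_mod_cast Nat.lt_of_lt_of_le Nat.zero_lt_one (by omega)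
        refine (cheb c f lam hf_nonneg h3 (hlam0 m h3) (fun i j => Y m i j)
          (fun i j => hmeas m i j) (hpois m h3) (hind m h3)
          (by positivity : (0:ℝ) < 1/((n:ℝ)+1))).trans ?_
        apply ENNReal.ofReal_le_ofReal
        apply le_of_eq
        rw [div_pow, one_pow]
        field_simp
      · simp only [if_neg h3]
        simp only [measure_empty]
        exact zero_le
    refine ne_top_of_le_ne_top ?_ (ENNReal.tsum_le_tsum hb)
    rw [← ENNReal.ofReal_tsum_of_nonneg (fun m => by positivity)
      (((Real.summable_one_div_nat_pow.mpr (by norm_num)).mul_left (800 * ((n:ℝ)+1)^2)))]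
    exact ENNReal.ofReal_ne_top
  have hall := (MeasureTheory.ae_all_iff).mpr hAE
  filter_upwards [hall] with ω hω
  rw [Metric.tendsto_atTop]
  intro ε hε
  obtain ⟨n, hn⟩ := exists_nat_one_div_lt hε
  have h1 := hω n
  rw [eventually_atTop] at h1
  obtain ⟨N, hN⟩ := h1
  refine ⟨max N 3, fun m hm => ?_⟩
  have h2 := hN m (le_trans (le_max_left _ _) hm)
  have h3 : 3 ≤ m := le_trans (le_max_right _ _) hm
  rw [if_pos h3] at h2
  simp only [Set.mem_setOf_eq, not_le] at h2
  rw [Real.dist_eq, sub_zero]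
  calc |(1/(m:ℝ)^2) * (∑ p ∈ Pm m, psiP c m (fun a b => Y m a b ω) p.1 p.2)
      - muM c f lam m| < 1/((n:ℝ)+1) := h2
    _ < ε := hn

end AS

end PerimHelper


/-- Under an inhomogeneous Poisson point process with intensity `λ_m f` and the limiting
regime, the normalized scaled perimeter converges almost surely:
`(1/m) P_m → 4(∫ q_{c,κ,f} - ∫ q_{c,κ,f}²)`. -/
theorem perimeter_limit_alternative
    {Ω : Type*} [MeasureSpace Ω] [IsProbabilityMeasure (ℙ : Measure Ω)]
    (c : ℕ) (hc : 1 ≤ c) (κ : ℝ) (hκ : 0 < κ)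
    (f : ℝ × ℝ → ℝ)
    (hf_cont : ContinuousOn f unitSq)
    (hf_nonneg : ∀ x ∈ unitSq, 0 ≤ f x)
    (hf_prob : ∫ x in unitSq, f x = 1)
    (lam : ℕ → ℝ) (hlam0 : ∀ m, 3 ≤ m → 0 < lam m)
    (hlam : Tendsto lam atTop atTop)
    (hreg : Tendsto (fun m => lam m / (m : ℝ) ^ 2) atTop (nhds κ))
    (Y : ℕ → ℕ → ℕ → Ω → ℕ)
    (hmeas : ∀ m i j, Measurable (Y m i j))
    (hpois : ∀ m, 3 ≤ m → ∀ i ∈ Finset.Icc 1 m, ∀ j ∈ Finset.Icc 1 m, ∀ k : ℕ,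
      ℙ {ω | Y m i j ω = k} =
        ENNReal.ofReal (Real.exp (-(lam m * ∫ x in cellSet m i j, f x)) *
          (lam m * ∫ x in cellSet m i j, f x) ^ k / (Nat.factorial k : ℝ)))
    (hind : ∀ m, 3 ≤ m → iIndepFun
      (fun q : (Finset.Icc 1 m ×ˢ Finset.Icc 1 m : Finset (ℕ × ℕ)) =>
        fun ω => Y m q.1.1 q.1.2 ω) ℙ) :
    ∀ᵐ ω ∂ℙ, Tendsto
      (fun m : ℕ => (1 / (m : ℝ)) * perimSum m (binZ c m (fun i j => Y m i j ω)))
      atTop (nhds (4 * ((∫ x in unitSq, qFun c κ f x) -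
        ∫ x in unitSq, (qFun c κ f x) ^ 2))) := by
  have hAS := PerimHelper.as_tendsto c f lam hf_nonneg hlam0 Y hmeas hpois hind
  have hmu := PerimHelper.muM_tendsto c κ f lam hc hκ hf_cont hf_nonneg hlam0 hreg
  filter_upwards [hAS] with ω hω
  have hsum := hω.add hmu
  rw [zero_add] at hsum
  refine hsum.congr (fun m => ?_)
  rw [sub_add_cancel, ← PerimHelper.perim_eq]
end
end

section
/- For c = 1 the limiting normalized area is maximized exactly by the uniform density: for every continuous probability density f : [0,1]² → [0,∞) with ∫_{[0,1]²} f(x) dx = 1 and every κ > 0, one has ∫_{[0,1]²} (1 − e^{−κ f(x)}) dx ≤ 1 − e^{−κ}, with equality if and only if f(x) = 1 for all x ∈ [0,1]². -/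
open MeasureTheory

noncomputable section

lemma unitSq_compact : IsCompact unitSq := isCompact_Icc.prod isCompact_Icc

lemma unitSq_meas : MeasurableSet unitSq :=
  (measurableSet_Icc).prod measurableSet_Icc

lemma unitSq_vol : MeasureTheory.volume unitSq = 1 := by
  rw [unitSq, Measure.volume_eq_prod, Measure.prod_prod, Real.volume_Icc]
  norm_num

lemma unitSq_closure_interior : unitSq ⊆ closure (interior unitSq) := by
  rw [unitSq, interior_prod_eq, interior_Icc, closure_prod_eq, closure_Ioo (by norm_num : (0:ℝ) ≠ 1)]

lemma key_le (κ t : ℝ) :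
    1 - Real.exp (-(κ * t)) ≤ (1 - Real.exp (-κ)) + κ * Real.exp (-κ) * (t - 1) := by
  have h := Real.add_one_le_exp (κ * (1 - t))
  have h2 : Real.exp (-κ) * (κ * (1 - t) + 1) ≤ Real.exp (-κ) * Real.exp (κ * (1 - t)) :=
    mul_le_mul_of_nonneg_left h (Real.exp_pos _).le
  rw [← Real.exp_add] at h2
  have : -κ + κ * (1 - t) = -(κ * t) := by ring
  rw [this] at h2
  nlinarith [h2]

lemma key_lt (κ t : ℝ) (hκ : 0 < κ) (ht : t ≠ 1) :
    1 - Real.exp (-(κ * t)) < (1 - Real.exp (-κ)) + κ * Real.exp (-κ) * (t - 1) := by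
  have h := Real.add_one_lt_exp (x := κ * (1 - t)) (by
    intro h; apply ht
    have : 1 - t = 0 := by
      rcases mul_eq_zero.1 h with h' | h'
      · exact absurd h' hκ.ne'
      · exact h'
    linarith)
  have h2 : Real.exp (-κ) * (κ * (1 - t) + 1) < Real.exp (-κ) * Real.exp (κ * (1 - t)) :=
    mul_lt_mul_of_pos_left h (Real.exp_pos _)
  rw [← Real.exp_add] at h2
  have : -κ + κ * (1 - t) = -(κ * t) := by ring
  rw [this] at h2
  nlinarith [h2]

/-- For threshold `c = 1`, the limiting normalized area
`∫_{[0,1]²} (1 - e^{-κ f(x)}) dx` is at most `1 - e^{-κ}`, with equality if and only if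
`f` is the uniform density on `[0,1]²`. -/
theorem area_limit_maximized_by_uniform
    (κ : ℝ) (hκ : 0 < κ) (f : ℝ × ℝ → ℝ)
    (hf_cont : ContinuousOn f unitSq)
    (hf_nonneg : ∀ x ∈ unitSq, 0 ≤ f x)
    (hf_prob : ∫ x in unitSq, f x = 1) :
    (∫ x in unitSq, (1 - Real.exp (-(κ * f x)))) ≤ 1 - Real.exp (-κ) ∧
      ((∫ x in unitSq, (1 - Real.exp (-(κ * f x)))) = 1 - Real.exp (-κ) ↔
        ∀ x ∈ unitSq, f x = 1) := by
  have hmeas := unitSq_meas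
  -- integrability
  have hfi : IntegrableOn f unitSq := hf_cont.integrableOn_compact unitSq_compact
  have hg_cont : ContinuousOn (fun x => 1 - Real.exp (-(κ * f x))) unitSq := by
    exact continuousOn_const.sub ((hf_cont.const_smul κ).neg.rexp)
  have hgi : IntegrableOn (fun x => 1 - Real.exp (-(κ * f x))) unitSq :=
    hg_cont.integrableOn_compact unitSq_compact
  have hφ_cont : ContinuousOn (fun x => (1 - Real.exp (-κ)) + κ * Real.exp (-κ) * (f x - 1)) unitSq := by
    exact continuousOn_const.add (continuousOn_const.mul (hf_cont.sub continuousOn_const))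
  have hφi : IntegrableOn (fun x => (1 - Real.exp (-κ)) + κ * Real.exp (-κ) * (f x - 1)) unitSq :=
    hφ_cont.integrableOn_compact unitSq_compact
  -- integral of φ
  have hc : IntegrableOn (fun _ : ℝ × ℝ => (1:ℝ)) unitSq :=
    integrableOn_const (by rw [unitSq_vol]; exact ENNReal.one_ne_top)
  have hc2 : IntegrableOn (fun _ : ℝ × ℝ => (1 - Real.exp (-κ))) unitSq :=
    integrableOn_const (by rw [unitSq_vol]; exact ENNReal.one_ne_top)
  have hsub : IntegrableOn (fun x => κ * Real.exp (-κ) * (f x - 1)) unitSq :=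
    (hfi.sub hc).const_mul _
  have hφ_int : (∫ x in unitSq, ((1 - Real.exp (-κ)) + κ * Real.exp (-κ) * (f x - 1))) = 1 - Real.exp (-κ) := by
    rw [integral_add hc2 hsub, integral_const_mul, integral_sub hfi hc,
      setIntegral_const, setIntegral_const, measureReal_def, unitSq_vol, hf_prob]
    simp
  have hle : (∫ x in unitSq, (1 - Real.exp (-(κ * f x)))) ≤ 1 - Real.exp (-κ) := by
    rw [← hφ_int]
    exact setIntegral_mono_on hgi hφi hmeas (fun x _ => key_le κ (f x))
  refine ⟨hle, ?_, ?_⟩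
  · intro heq
    -- h := φ - g ≥ 0, integral zero
    set h : ℝ × ℝ → ℝ := fun x => ((1 - Real.exp (-κ)) + κ * Real.exp (-κ) * (f x - 1)) - (1 - Real.exp (-(κ * f x))) with hh
    have hh_cont : ContinuousOn h unitSq := hφ_cont.sub hg_cont
    have hh_int : (∫ x in unitSq, h x) = 0 := by
      rw [hh]
      rw [integral_sub hφi hgi, hφ_int, heq, sub_self]
    have hh_nonneg : 0 ≤ᵐ[volume.restrict unitSq] h := by
      filter_upwards [ae_restrict_mem hmeas] with x hx
      exact sub_nonneg.2 (key_le κ (f x))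
    have hzero : h =ᵐ[volume.restrict unitSq] 0 := by
      have := (setIntegral_eq_zero_iff_of_nonneg_ae hh_nonneg (hφi.sub hgi)).1 hh_int
      exact this
    have heqon : Set.EqOn h 0 unitSq :=
      Measure.eqOn_of_ae_eq hzero hh_cont continuousOn_const unitSq_closure_interior
    intro x hx
    by_contra hne
    have := key_lt κ (f x) hκ hne
    have h0 := heqon hx
    simp only [Pi.zero_apply, hh] at h0
    linarith
  · intro hone
    have : (∫ x in unitSq, (1 - Real.exp (-(κ * f x)))) = ∫ _x in unitSq, (1 - Real.exp (-κ)) := by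
      refine setIntegral_congr_fun hmeas fun x hx => ?_
      rw [hone x hx, mul_one]
    rw [this, setIntegral_const, measureReal_def, unitSq_vol]
    simp
end
end
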